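/- arXiv:1311.5244 — 4 statements merged into one kernel-verified Lean document; each statement's English description precedes it below -/
import Mathlib

section
/- In the setting of the recursive evolution-strategy construction (i.i.d. movements M_t^{i,j}, step sizes Σ_t, selected solutions X_t, and D_t = (−n^⊤X_{t−1})/Σ_t), if additionally the step size is constant, i.e. Σ_t = σ ∈ ℝ_+ almost surely for all t ∈ ℕ, then the one-dimensional process (D_t)_{t∈ℕ} is itself a homogeneous Markov chain: there exists a single Markov kernel κ on ℝ_+ such that for every t ∈ ℕ the conditional distribution of D_{t+1} given D_1, …, D_t equals κ(D_t) almost surely. -/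
open MeasureTheory ProbabilityTheory

namespace EvoAux

variable {α : Type*} [MeasurableSpace α]

/-- countable piecewise measurability -/
lemma measurable_of_cover {β : Type*} [MeasurableSpace β] {ι : Type*} [Countable ι]
    {A : ι → Set α} (hA : ∀ i, MeasurableSet (A i))
    {g : ι → α → β} (hg : ∀ i, Measurable (g i))
    {f : α → β} (hf : ∀ i x, x ∈ A i → f x = g i x)
    (hcov : ∀ x, ∃ i, x ∈ A i) : Measurable f := by
  intro s hs
  have : f ⁻¹' s = ⋃ i, A i ∩ g i ⁻¹' s := by
    ext x
    constructor
    · intro hx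
      obtain ⟨i, hi⟩ := hcov x
      exact Set.mem_iUnion.2 ⟨i, hi, by simpa [hf i x hi] using hx⟩
    · rintro hx
      obtain ⟨i, hi, hgi⟩ := Set.mem_iUnion.1 hx
      simpa [Set.mem_preimage, hf i x hi] using hgi
  rw [this]
  exact MeasurableSet.iUnion fun i => (hA i).inter (hg i hs)

lemma measurableSet_sInf_eq (q : ℕ → α → Prop)
    (hq : ∀ j, MeasurableSet {x | q j x}) (j : ℕ) :
    MeasurableSet {x | sInf {j' | q j' x} = j} := by
  have heq : {x | sInf {j' | q j' x} = j} =
      ((⋂ k ∈ Finset.range j, {x | q k x}ᶜ) ∩ {x | q j x}) ∪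
        (if j = 0 then ⋂ k, {x | q k x}ᶜ else ∅) := by
    ext x
    by_cases hne : {j' | q j' x}.Nonempty
    · have hmem := Nat.sInf_mem hne
      constructor
      · intro hx
        left
        refine ⟨?_, by rw [← hx]; exact hmem⟩
        simp only [Set.mem_iInter, Finset.mem_range, Set.mem_compl_iff, Set.mem_setOf_eq]
        intro k hk
        exact Nat.notMem_of_lt_sInf (hx ▸ hk)
      · intro hx
        rcases hx with hx | hx
        · obtain ⟨h1, h2⟩ := hx
          simp only [Set.mem_iInter, Finset.mem_range, Set.mem_compl_iff, Set.mem_setOf_eq] at h1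
          refine le_antisymm (Nat.sInf_le h2) ?_
          by_contra hlt
          exact h1 _ (not_le.1 hlt) hmem
        · by_cases hj : j = 0
          · subst hj
            rw [if_pos rfl] at hx
            have hforall : ∀ k, ¬ q k x := by
              intro k
              have := Set.mem_iInter.1 hx k
              simpa using this
            exact absurd hne (by
              rw [Set.not_nonempty_iff_eq_empty, Set.eq_empty_iff_forall_notMem]
              exact hforall)
          · rw [if_neg hj] at hx
            exact absurd hx (Set.notMem_empty x)
    · have hempty : {j' | q j' x} = ∅ := Set.not_nonempty_iff_eq_empty.1 hne
      have h0 : sInf {j' | q j' x} = 0 := by rw [hempty]; exact Nat.sInf_empty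
      rw [Set.mem_setOf_eq, h0]
      constructor
      · intro hx
        right
        rw [← hx, if_pos rfl]
        exact Set.mem_iInter.2 fun k => by
          simp only [Set.mem_compl_iff, Set.mem_setOf_eq]
          exact fun hk => hne ⟨k, hk⟩
      · intro hx
        rcases hx with hx | hx
        · exact absurd hx.2 (by
            have := Set.eq_empty_iff_forall_notMem.1 hempty j
            simpa using this)
        · by_cases hj : j = 0
          · exact hj.symm
          · rw [if_neg hj] at hx
            exact absurd hx (Set.notMem_empty x)
  rw [heq]
  refine MeasurableSet.union ?_ ?_
  · exact (MeasurableSet.biInter (Finset.range j).countable_toSet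
      fun k _ => (hq k).compl).inter (hq j)
  · split
    · exact MeasurableSet.iInter fun k => (hq k).compl
    · exact MeasurableSet.empty



noncomputable section

variable {d lam : ℕ}

/-- first trial index below threshold `τ` -/
def jsel (n : Fin d → ℝ) (τ : ℝ) (w : Fin lam × ℕ → Fin d → ℝ) (i : Fin lam) : ℕ :=
  sInf {j | ∑ k, n k * w (i, j) k < τ}

def iStarN (v : Fin lam → ℝ) : ℕ :=
  sInf {m | ∃ h : m < lam, ∀ i, v i ≤ v ⟨m, h⟩}

def iStar (hlam : 0 < lam) (v : Fin lam → ℝ) : Fin lam :=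
  if h : iStarN v < lam then ⟨iStarN v, h⟩ else ⟨0, hlam⟩

lemma iStarN_mem (hlam : 0 < lam) (v : Fin lam → ℝ) :
    iStarN v ∈ {m | ∃ h : m < lam, ∀ i, v i ≤ v ⟨m, h⟩} := by
  apply Nat.sInf_mem
  obtain ⟨i, _, hi⟩ := Finset.exists_max_image Finset.univ v ⟨⟨0, hlam⟩, Finset.mem_univ _⟩
  exact ⟨i.1, i.2, fun i' => by simpa using hi i' (Finset.mem_univ _)⟩

lemma iStarN_lt (hlam : 0 < lam) (v : Fin lam → ℝ) : iStarN v < lam :=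
  (iStarN_mem hlam v).1

lemma iStar_eq (hlam : 0 < lam) (v : Fin lam → ℝ) :
    iStar hlam v = ⟨iStarN v, iStarN_lt hlam v⟩ := by
  rw [iStar, dif_pos (iStarN_lt hlam v)]

lemma iStar_max (hlam : 0 < lam) (v : Fin lam → ℝ) (i : Fin lam) :
    v i ≤ v (iStar hlam v) := by
  rw [iStar_eq]
  obtain ⟨h, hmax⟩ := iStarN_mem hlam v
  exact hmax i

lemma iStar_min (hlam : 0 < lam) (v : Fin lam → ℝ) (i : Fin lam)
    (hi : ∀ i', v i' ≤ v i) : iStar hlam v ≤ i := by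
  rw [iStar_eq, Fin.le_def]
  exact Nat.sInf_le ⟨i.2, by simpa using hi⟩

lemma iStar_eq_iff (hlam : 0 < lam) (v : Fin lam → ℝ) (i : Fin lam) :
    iStar hlam v = i ↔ iStarN v = i.1 := by
  rw [iStar_eq]
  constructor
  · intro h; exact congrArg Fin.val h
  · intro h; exact Fin.ext h

/-- the selected movement, as a function of the threshold and the array -/
def sel (hlam : 0 < lam) (n : Fin d → ℝ) (k0 : Fin d) (τ : ℝ)
    (w : Fin lam × ℕ → Fin d → ℝ) : Fin d → ℝ :=
  w (iStar hlam (fun i => w (i, jsel n τ w i) k0),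
     jsel n τ w (iStar hlam (fun i => w (i, jsel n τ w i) k0)))

variable (n : Fin d → ℝ) (k0 : Fin d)

abbrev E (d lam : ℕ) := Fin lam × ℕ → Fin d → ℝ

lemma measurable_q (i : Fin lam) (j : ℕ) :
    MeasurableSet {p : ℝ × E d lam | ∑ k, n k * p.2 (i, j) k < p.1} := by
  apply measurableSet_lt
  · exact Finset.measurable_sum _ fun k _ =>
      (measurable_const.mul (((measurable_pi_apply (i, j)).comp measurable_snd).eval))
  · exact measurable_fst

lemma measurableSet_jsel (i : Fin lam) (j : ℕ) :
    MeasurableSet {p : ℝ × E d lam | jsel n p.1 p.2 i = j} := by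
  simp only [jsel]
  exact measurableSet_sInf_eq (fun j' (p : ℝ × E d lam) => ∑ k, n k * p.2 (i, j') k < p.1)
    (fun j' => measurable_q n i j') j

lemma measurable_vsel (i : Fin lam) :
    Measurable (fun p : ℝ × E d lam => p.2 (i, jsel n p.1 p.2 i) k0) := by
  apply measurable_of_cover (ι := ℕ)
    (A := fun j => {p : ℝ × E d lam | jsel n p.1 p.2 i = j})
    (g := fun j p => p.2 (i, j) k0)
    (hA := fun j => measurableSet_jsel n i j)
    (hg := fun j => ((measurable_pi_apply (i, j)).comp measurable_snd).eval)
  · intro j p hp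
    simp only [Set.mem_setOf_eq] at hp
    rw [hp]
  · intro p
    exact ⟨jsel n p.1 p.2 i, rfl⟩

lemma measurableSet_iStarN' {α : Type*} [MeasurableSpace α] (hlam : 0 < lam)
    (v : Fin lam → α → ℝ) (hv : ∀ i, Measurable (v i)) (m0 : ℕ) :
    MeasurableSet {x | iStarN (fun i => v i x) = m0} := by
  simp only [iStarN]
  refine measurableSet_sInf_eq
    (fun m x => ∃ h : m < lam, ∀ i', v i' x ≤ v ⟨m, h⟩ x) (fun m => ?_) m0
  by_cases hm : m < lam
  · have : {x | ∃ h : m < lam, ∀ i', v i' x ≤ v ⟨m, h⟩ x} =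
        ⋂ i' : Fin lam, {x | v i' x ≤ v ⟨m, hm⟩ x} := by
      ext x
      simp only [Set.mem_setOf_eq, Set.mem_iInter]
      exact ⟨fun ⟨h, hall⟩ i' => hall i', fun hall => ⟨hm, fun i' => hall i'⟩⟩
    rw [this]
    exact MeasurableSet.iInter fun i' => measurableSet_le (hv i') (hv ⟨m, hm⟩)
  · have : {x | ∃ h : m < lam, ∀ i', v i' x ≤ v ⟨m, h⟩ x} = ∅ := by
      ext x; simp only [Set.mem_setOf_eq, Set.mem_empty_iff_false, iff_false]
      rintro ⟨h, -⟩; exact hm h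
    rw [this]; exact MeasurableSet.empty

lemma measurableSet_iStarN (hlam : 0 < lam) (i : Fin lam) :
    MeasurableSet {p : ℝ × E d lam |
      iStarN (fun i' => p.2 (i', jsel n p.1 p.2 i') k0) = i.1} :=
  measurableSet_iStarN' hlam _ (fun i' => measurable_vsel n k0 i') i.1

lemma measurable_sel (hlam : 0 < lam) :
    Measurable (fun p : ℝ × E d lam => sel hlam n k0 p.1 p.2) := by
  apply measurable_of_cover (ι := Fin lam × ℕ)
    (A := fun q => {p : ℝ × E d lam |
        iStar hlam (fun i' => p.2 (i', jsel n p.1 p.2 i') k0) = q.1} ∩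
      {p : ℝ × E d lam | jsel n p.1 p.2 q.1 = q.2})
    (g := fun q p => p.2 q)
  · intro q
    refine MeasurableSet.inter ?_ (measurableSet_jsel n q.1 q.2)
    have : {p : ℝ × E d lam |
        iStar hlam (fun i' => p.2 (i', jsel n p.1 p.2 i') k0) = q.1} =
        {p : ℝ × E d lam |
          iStarN (fun i' => p.2 (i', jsel n p.1 p.2 i') k0) = q.1.1} := by
      ext p; exact iStar_eq_iff hlam _ q.1
    rw [this]
    exact measurableSet_iStarN n k0 hlam q.1
  · exact fun q => (measurable_pi_apply q).comp measurable_snd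
  · rintro ⟨i, j⟩ p ⟨h1, h2⟩
    simp only [Set.mem_setOf_eq] at h1 h2
    simp only [sel, h1, h2]
  · intro p
    exact ⟨(iStar hlam (fun i' => p.2 (i', jsel n p.1 p.2 i') k0),
      jsel n p.1 p.2 (iStar hlam (fun i' => p.2 (i', jsel n p.1 p.2 i') k0))),
      ⟨rfl, rfl⟩⟩

end
lemma measurable_pi_lambda' {α δ : Type*} {m : MeasurableSpace α} {π : δ → Type*}
    [∀ a, MeasurableSpace (π a)] (f : α → ∀ a, π a)
    (hf : ∀ a, Measurable[m] fun c => f c a) : Measurable[m] f :=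
  measurable_pi_lambda f hf

lemma measurable_linear_form {α : Type*} {m : MeasurableSpace α} {d : ℕ}
    (n : Fin d → ℝ) (σ : ℝ) {X : α → Fin d → ℝ} (hX : Measurable[m] X) :
    Measurable[m] (fun ω => (-(∑ k, n k * X ω k)) / σ) :=
  ((Finset.measurable_sum _ fun k _ =>
    (hX.eval (a := k)).const_mul (n k)).neg).div_const σ

lemma measurable_prod_mk' {α β γ : Type*} {m : MeasurableSpace α}
    [MeasurableSpace β] [MeasurableSpace γ] {f : α → β} {g : α → γ}
    (hf : Measurable[m] f) (hg : Measurable[m] g) :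
    Measurable[m] fun a => (f a, g a) :=
  hf.prodMk hg

end EvoAux


open EvoAux in
/-- In the evolution-strategy construction with constant step size
`σ > 0`, the normalized-distance process `D_t = (−n^⊤X_{t−1})/σ` is itself a
homogeneous Markov chain: one single Markov kernel `κ` on `ℝ` gives, for every
`t ≥ 1`, the conditional distribution of `D_{t+1}` given `D_1, …, D_t` as `κ (D_t)`
almost surely. -/
theorem markov_chain_of_constant_step_size_evolution_strategy
    {Ω : Type*} {mΩ : MeasurableSpace Ω} (μ : Measure Ω) [IsProbabilityMeasure μ]
    (d lam : ℕ) (hd : 2 ≤ d) (hlam : 1 ≤ lam)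
    (n : Fin d → ℝ) (σ : ℝ) (hσ : 0 < σ)
    -- the movements: an i.i.d. array indexed by generation `t`, individual `i`, trial `j`
    (M : ℕ → Fin lam → ℕ → Ω → (Fin d → ℝ))
    (hMmeas : ∀ t i j, Measurable (M t i j))
    (ν : Measure (Fin d → ℝ))
    (hMlaw : ∀ t i j, Measure.map (M t i j) μ = ν)
    (hMindep : iIndepFun (fun (p : ℕ × Fin lam × ℕ) => M p.1 p.2.1 p.2.2) μ)
    -- each movement goes below any positive level with positive probability
    (hcross : ∀ δ : ℝ, 0 < δ → 0 < ν {x | ∑ k, n k * x k < δ})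
    -- the processes
    (X : ℕ → Ω → (Fin d → ℝ))
    (J : ℕ → Fin lam → ℝ → Ω → ℕ) (Y : ℕ → Fin lam → Ω → (Fin d → ℝ))
    (I : ℕ → Ω → Fin lam) (D : ℕ → Ω → ℝ)
    -- `X_0` is independent of the movements
    (hX0meas : Measurable (X 0))
    (hindep0 : IndepFun (X 0) (fun ω => fun t i j => M t i j ω) μ)
    (hX0pos : ∀ᵐ ω ∂μ, 0 < -(∑ k, n k * X 0 ω k))
    -- j_{t,i}(δ) = min { j : n^⊤ M_t^{i,j} < δ }
    (hJ : ∀ t i δ ω, J t i δ ω = sInf {j : ℕ | ∑ k, n k * M t i j ω k < δ})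
    -- Y_t^i = X_{t-1} + σ · M_t^{i, j_{t,i}(−n^⊤X_{t-1})}
    (hY : ∀ t : ℕ, 1 ≤ t → ∀ i ω,
      Y t i ω = X (t - 1) ω +
        σ • M t i (J t i (-(∑ k, n k * X (t - 1) ω k)) ω) ω)
    -- i_t is the smallest index maximizing the first coordinate of Y_t^i
    (hImax : ∀ t : ℕ, 1 ≤ t → ∀ ω i',
      Y t i' ω ⟨0, by omega⟩ ≤ Y t (I t ω) ω ⟨0, by omega⟩)
    (hImin : ∀ t : ℕ, 1 ≤ t → ∀ ω i',
      (∀ i'', Y t i'' ω ⟨0, by omega⟩ ≤ Y t i' ω ⟨0, by omega⟩) → I t ω ≤ i')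
    -- X_t = Y_t^{i_t}
    (hX : ∀ t : ℕ, 1 ≤ t → ∀ ω, X t ω = Y t (I t ω) ω)
    -- D_t = (−n^⊤X_{t−1}) / σ
    (hD : ∀ t : ℕ, 1 ≤ t → ∀ ω, D t ω = (-(∑ k, n k * X (t - 1) ω k)) / σ) :
    ∃ κ : Kernel ℝ ℝ, IsMarkovKernel κ ∧
      ∀ t : ℕ, 1 ≤ t → ∀ A : Set ℝ, MeasurableSet A →
        (μ[fun ω => Set.indicator A (fun _ => (1 : ℝ)) (D (t + 1) ω) |
            ⨆ s ∈ Set.Icc 1 t, MeasurableSpace.comap (D s) inferInstance])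
          =ᵐ[μ] fun ω => (κ (D t ω) A).toReal := by
  have hlam' : 0 < lam := hlam
  set k0 : Fin d := ⟨0, by omega⟩ with hk0
  -- the array of movements of generation t
  set W : ℕ → Ω → E d lam := fun t ω q => M t q.1 q.2 ω with hW
  have hWmeas : ∀ t, Measurable (W t) := fun t =>
    measurable_pi_lambda _ fun q => hMmeas t q.1 q.2
  -- law of the movements array
  set P : Measure (E d lam) := μ.map (W 1) with hP
  have hPprob : IsProbabilityMeasure P := Measure.isProbabilityMeasure_map (hWmeas 1).aemeasurable
  -- the transition function
  set Gc : ℝ × E d lam → ℝ :=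
    fun p => p.1 - ∑ k, n k * sel hlam' n k0 (σ * p.1) p.2 k with hGc
  have hsel2 : Measurable fun p : ℝ × E d lam => sel hlam' n k0 (σ * p.1) p.2 :=
    (measurable_sel n k0 hlam').comp ((measurable_fst.const_mul σ).prodMk measurable_snd)
  have hGcmeas : Measurable Gc :=
    measurable_fst.sub <| Finset.measurable_sum _ fun k _ =>
      (hsel2.eval (a := k)).const_mul _
  -- the kernel
  have hGδ : ∀ δ : ℝ, Measurable fun w : E d lam => Gc (δ, w) := fun δ =>
    hGcmeas.comp measurable_prodMk_left
  have hκmeas : Measurable fun δ : ℝ => P.map (fun w => Gc (δ, w)) := by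
    apply Measure.measurable_of_measurable_coe
    intro s hs
    have heq : (fun δ : ℝ => P.map (fun w => Gc (δ, w)) s)
        = fun δ => P (Prod.mk δ ⁻¹' (Gc ⁻¹' s)) := by
      funext δ
      rw [Measure.map_apply (hGδ δ) hs]
      rfl
    rw [heq]
    exact measurable_measure_prodMk_left (hGcmeas hs)
  set κ : Kernel ℝ ℝ := ⟨fun δ => P.map (fun w => Gc (δ, w)), hκmeas⟩ with hκ
  have hκ_apply : ∀ δ (A : Set ℝ), MeasurableSet A →
      κ δ A = P {w | Gc (δ, w) ∈ A} := by
    intro δ A hA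
    show (P.map (fun w => Gc (δ, w))) A = _
    rw [Measure.map_apply (hGδ δ) hA]
    rfl
  have hκmarkov : IsMarkovKernel κ := by
    constructor
    intro δ
    show IsProbabilityMeasure (P.map (fun w => Gc (δ, w)))
    exact Measure.isProbabilityMeasure_map ((hGδ δ).aemeasurable)
  -- pointwise recursion for X
  have hXrec : ∀ s : ℕ, 1 ≤ s → ∀ ω,
      X s ω = X (s-1) ω + σ • sel hlam' n k0 (-(∑ k, n k * X (s-1) ω k)) (W s ω) := by
    intro s hs ω
    set τ := -(∑ k, n k * X (s-1) ω k) with hτ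
    set w := W s ω with hwdef
    have hj : ∀ i, jsel n τ w i = J s i τ ω := by
      intro i
      rw [hJ]
      rfl
    set v : Fin lam → ℝ := fun i => w (i, jsel n τ w i) k0 with hv
    have hYk : ∀ i, Y s i ω k0 = X (s-1) ω k0 + σ * v i := by
      intro i
      rw [hY s hs i ω, ← hτ]
      simp only [Pi.add_apply, Pi.smul_apply, smul_eq_mul]
      congr 2
      rw [hv]
      simp only
      rw [hj i]
    have hIeq : iStar hlam' v = I s ω := by
      refine le_antisymm ?_ ?_
      · apply iStar_min
        intro i'
        have h2 : Y s i' ω k0 ≤ Y s (I s ω) ω k0 := hImax s hs ω i'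
        rw [hYk, hYk] at h2
        have h3 : σ * v i' ≤ σ * v (I s ω) := by linarith
        exact le_of_mul_le_mul_left h3 hσ
      · apply hImin s hs ω
        intro i''
        show Y s i'' ω k0 ≤ Y s (iStar hlam' v) ω k0
        rw [hYk, hYk]
        have h4 := iStar_max hlam' v i''
        nlinarith
    have hsel : sel hlam' n k0 τ w
        = M s (I s ω) (J s (I s ω) τ ω) ω := by
      rw [sel]
      rw [show (fun i => w (i, jsel n τ w i) k0) = v from rfl, hIeq, hj]
    rw [hX s hs ω, hY s hs (I s ω) ω, ← hτ, hsel]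
  -- measurability of the processes
  have hΦsel : Measurable fun p : (Fin d → ℝ) × E d lam =>
      sel hlam' n k0 (-(∑ k, n k * p.1 k)) p.2 :=
    (measurable_sel n k0 hlam').comp
      (((Finset.measurable_sum _ fun k _ =>
        (by fun_prop : Measurable fun p : (Fin d → ℝ) × E d lam => n k * p.1 k)).neg).prodMk measurable_snd)
  have hΦmeas : Measurable fun p : (Fin d → ℝ) × E d lam =>
      p.1 + σ • sel hlam' n k0 (-(∑ k, n k * p.1 k)) p.2 :=
    measurable_fst.add (hΦsel.const_smul σ)
  have hXmeas : ∀ s, Measurable (X s) := by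
    intro s
    induction s with
    | zero => exact hX0meas
    | succ r ih =>
      have heq : X (r+1) = fun ω =>
          (fun p : (Fin d → ℝ) × E d lam =>
            p.1 + σ • sel hlam' n k0 (-(∑ k, n k * p.1 k)) p.2) (X r ω, W (r+1) ω) := by
        funext ω
        have h := hXrec (r+1) (by omega) ω
        simpa [Nat.add_sub_cancel] using h
      rw [heq]
      exact hΦmeas.comp (ih.prodMk (hWmeas (r+1)))
  have hDmeas : ∀ s, 1 ≤ s → Measurable (D s) := by
    intro s hs
    have heq : D s = fun ω => (-(∑ k, n k * X (s-1) ω k)) / σ := funext fun ω => hD s hs ω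
    rw [heq]
    exact ((Finset.measurable_sum _ fun k _ =>
      ((hXmeas (s-1)).eval (a := k)).const_mul (n k)).neg).div_const σ
  -- recursion for D
  have hDrec : ∀ s : ℕ, 1 ≤ s → ∀ ω, D (s+1) ω = Gc (D s ω, W s ω) := by
    intro s hs ω
    have hXs := hXrec s hs ω
    have h1 : D (s+1) ω = (-(∑ k, n k * X s ω k)) / σ := by
      have h := hD (s+1) (by omega) ω
      simpa [Nat.add_sub_cancel] using h
    have h2 : D s ω = (-(∑ k, n k * X (s-1) ω k)) / σ := hD s hs ω
    have hτσ : σ * D s ω = -(∑ k, n k * X (s-1) ω k) := by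
      rw [h2]
      field_simp
    show _ = D s ω - ∑ k, n k * sel hlam' n k0 (σ * D s ω) (W s ω) k
    rw [hτσ, h1, hXs, h2]
    have hsum : ∑ k, n k * (X (s-1) ω
          + σ • sel hlam' n k0 (-(∑ k, n k * X (s-1) ω k)) (W s ω)) k
        = (∑ k, n k * X (s-1) ω k)
          + σ * ∑ k, n k * sel hlam' n k0 (-(∑ k, n k * X (s-1) ω k)) (W s ω) k := by
      rw [Finset.mul_sum]
      rw [← Finset.sum_add_distrib]
      apply Finset.sum_congr rfl
      intro k _
      simp only [Pi.add_apply, Pi.smul_apply, smul_eq_mul]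
      ring
    rw [hsum]
    field_simp
    ring
  -- the extended independent family : X 0 together with all movements
  classical
  set g : Option (ℕ × Fin lam × ℕ) → Ω → (Fin d → ℝ) :=
    fun o => Option.elim o (X 0) (fun p => M p.1 p.2.1 p.2.2) with hgdef
  have hgmeas : ∀ o, Measurable (g o) := by
    rintro (_ | p)
    · exact hX0meas
    · exact hMmeas p.1 p.2.1 p.2.2
  have hgindep : iIndepFun g μ := by
    rw [iIndepFun_iff_measure_inter_preimage_eq_mul]
    intro S sets hsets
    set T : Finset (ℕ × Fin lam × ℕ) := S.preimage some (Option.some_injective _).injOn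
      with hT
    have hTmem : ∀ p, p ∈ T ↔ some p ∈ S := fun p => Finset.mem_preimage
    have hMpart : μ (⋂ p ∈ T, g (some p) ⁻¹' sets (some p))
        = ∏ p ∈ T, μ (g (some p) ⁻¹' sets (some p)) :=
      hMindep.measure_inter_preimage_eq_mul T (sets := fun p => sets (some p))
        (fun p hp => hsets (some p) ((hTmem p).1 hp))
    by_cases hnone : none ∈ S
    · have hSrepr : S = insert none (T.map ⟨some, Option.some_injective _⟩) := by
        ext o
        cases o with
        | none => simp [hnone]
        | some p => simp [Finset.mem_map, hTmem]
      have hnotmem : none ∉ T.map ⟨some, Option.some_injective _⟩ := by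
        simp [Finset.mem_map]
      have h1 : ⋂ o ∈ S, g o ⁻¹' sets o
          = (X 0 ⁻¹' sets none) ∩ ⋂ p ∈ T, g (some p) ⁻¹' sets (some p) := by
        ext x
        simp only [Set.mem_iInter, Set.mem_inter_iff]
        constructor
        · intro h
          exact ⟨h none hnone, fun p hp => h (some p) ((hTmem p).1 hp)⟩
        · rintro ⟨h0, h⟩ o ho
          cases o with
          | none => exact h0
          | some p => exact h p ((hTmem p).2 ho)
      set C : Set (ℕ → Fin lam → ℕ → Fin d → ℝ) :=
        ⋂ p ∈ T, (fun a => a p.1 p.2.1 p.2.2) ⁻¹' sets (some p) with hC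
      have hCmeas : MeasurableSet C :=
        MeasurableSet.biInter T.countable_toSet fun p hp =>
          (((measurable_pi_apply p.1).eval (a := p.2.1)).eval (a := p.2.2))
            (hsets (some p) ((hTmem p).1 hp))
      have hCpre : (fun ω => fun t i j => M t i j ω) ⁻¹' C
          = ⋂ p ∈ T, g (some p) ⁻¹' sets (some p) := by
        rw [hC, Set.preimage_iInter₂]
        rfl
      have hkey := hindep0.measure_inter_preimage_eq_mul
        (sets none) C (hsets none hnone) hCmeas
      rw [hCpre] at hkey
      rw [h1, hkey, hMpart, hSrepr, Finset.prod_insert hnotmem, Finset.prod_map]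
      rfl
    · have hSrepr : S = T.map ⟨some, Option.some_injective _⟩ := by
        ext o
        cases o with
        | none => simp [hnone]
        | some p => simp [Finset.mem_map, hTmem]
      have h1 : ⋂ o ∈ S, g o ⁻¹' sets o = ⋂ p ∈ T, g (some p) ⁻¹' sets (some p) := by
        ext x
        simp only [Set.mem_iInter]
        constructor
        · intro h p hp
          exact h (some p) ((hTmem p).1 hp)
        · intro h o ho
          cases o with
          | none => exact absurd ho hnone
          | some p => exact h p ((hTmem p).2 ho)
      rw [h1, hMpart, hSrepr, Finset.prod_map]
      rfl
  have hgle : ∀ o, MeasurableSpace.comap (g o) inferInstance ≤ mΩ :=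
    fun o => (hgmeas o).comap_le
  have hiIndep : iIndep (fun o => MeasurableSpace.comap (g o) inferInstance) μ :=
    (iIndepFun_iff_iIndep _ _ _).1 hgindep
  -- generation t block σ-algebras
  set Blk : ℕ → Set (Option (ℕ × Fin lam × ℕ)) :=
    fun t => {o | ∃ q : Fin lam × ℕ, o = some (t, q)} with hBlk
  set mb : ℕ → MeasurableSpace Ω := fun t =>
    ⨆ o ∈ Blk t, MeasurableSpace.comap (g o) inferInstance with hmb
  set mc : ℕ → MeasurableSpace Ω := fun t =>
    ⨆ o ∈ (Blk t)ᶜ, MeasurableSpace.comap (g o) inferInstance with hmc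
  have hblock : ∀ t : ℕ, Indep (mb t) (mc t) μ :=
    fun t => indep_biSup_compl hgle hiIndep _
  have hle_mb : ∀ (t : ℕ) o, o ∈ Blk t →
      MeasurableSpace.comap (g o) inferInstance ≤ mb t :=
    fun t o ho => le_biSup (fun o => MeasurableSpace.comap (g o) inferInstance) ho
  have hle_mc : ∀ (t : ℕ) o, o ∈ (Blk t)ᶜ →
      MeasurableSpace.comap (g o) inferInstance ≤ mc t :=
    fun t o ho => le_biSup (fun o => MeasurableSpace.comap (g o) inferInstance) ho
  have hmemnone : ∀ t, (none : Option (ℕ × Fin lam × ℕ)) ∈ (Blk t)ᶜ := by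
    intro t
    simp [hBlk]
  have hmemsome : ∀ (t s : ℕ) (q : Fin lam × ℕ), s ≠ t →
      (some (s, q) : Option (ℕ × Fin lam × ℕ)) ∈ (Blk t)ᶜ := by
    intro t s q hst
    simp only [hBlk, Set.mem_compl_iff, Set.mem_setOf_eq, not_exists,
      Option.some.injEq, Prod.mk.injEq, not_and]
    intro q' h
    exact absurd h hst
  have hWle : ∀ t : ℕ, MeasurableSpace.comap (W t) inferInstance ≤ mb t := by
    intro t
    apply Measurable.comap_le
    exact measurable_pi_lambda' _ fun q =>
      (measurable_iff_comap_le.2 (hle_mb t (some (t, q)) ⟨q, rfl⟩) :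
        Measurable[mb t] (g (some (t, q))))
  have hXble : ∀ t r : ℕ, r < t → Measurable[mc t] (X r) := by
    intro t r
    induction r with
    | zero =>
      intro _
      exact (measurable_iff_comap_le.2 (hle_mc t none (hmemnone t)) :
        Measurable[mc t] (g none))
    | succ r ih =>
      intro hrt
      have hWble : Measurable[mc t] (W (r+1)) :=
        measurable_pi_lambda' _ fun q =>
          (measurable_iff_comap_le.2
            (hle_mc t (some (r+1, q)) (hmemsome t (r+1) q (by omega))) :
            Measurable[mc t] (g (some (r+1, q))))
      have heq : X (r+1) = fun ω =>
          (fun p : (Fin d → ℝ) × E d lam =>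
            p.1 + σ • sel hlam' n k0 (-(∑ k, n k * p.1 k)) p.2) (X r ω, W (r+1) ω) := by
        funext ω
        have h := hXrec (r+1) (by omega) ω
        simpa [Nat.add_sub_cancel] using h
      rw [heq]
      exact hΦmeas.comp (measurable_prod_mk' (ih (by omega)) hWble)
  have hDble : ∀ t s : ℕ, 1 ≤ s → s ≤ t → Measurable[mc t] (D s) := by
    intro t s hs hst
    have heq : D s = fun ω => (-(∑ k, n k * X (s-1) ω k)) / σ := funext fun ω => hD s hs ω
    rw [heq]
    exact measurable_linear_form n σ (hXble t (s-1) (by omega))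
  -- the law of each generation's movement array is the same
  have hνprob : IsProbabilityMeasure ν := by
    rw [← hMlaw 0 ⟨0, hlam'⟩ 0]
    exact Measure.isProbabilityMeasure_map (hMmeas 0 _ 0).aemeasurable
  have htupmeas : ∀ (t : ℕ) (s : Finset (Fin lam × ℕ)),
      Measurable (fun ω => fun q : s => M t (q : Fin lam × ℕ).1 (q : Fin lam × ℕ).2 ω) :=
    fun t s => measurable_pi_lambda _ fun q => hMmeas t _ _
  have htup : ∀ (t : ℕ) (s : Finset (Fin lam × ℕ)),
      μ.map (fun ω => fun q : s => M t (q : Fin lam × ℕ).1 (q : Fin lam × ℕ).2 ω)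
        = Measure.pi (fun _ => ν) := by
    intro t s
    refine (Measure.pi_eq fun B hB => ?_).symm
    rw [Measure.map_apply (htupmeas t s) (MeasurableSet.univ_pi hB)]
    set emb : (Fin lam × ℕ) ↪ ℕ × Fin lam × ℕ :=
      ⟨fun q => (t, q), fun a b h => by simpa [Prod.mk.injEq] using h⟩ with hemb
    set sets : (ℕ × Fin lam × ℕ) → Set (Fin d → ℝ) :=
      fun p => ⋂ h : p.2 ∈ s, B ⟨p.2, h⟩ with hsets
    have hsetsmeas : ∀ p, MeasurableSet (sets p) :=
      fun p => MeasurableSet.iInter fun h => hB _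
    have hpre : (fun ω => fun q : s => M t (q : Fin lam × ℕ).1 (q : Fin lam × ℕ).2 ω) ⁻¹'
          (Set.pi Set.univ B)
        = ⋂ p ∈ s.map emb, (fun p (ω : Ω) => M p.1 p.2.1 p.2.2 ω) p ⁻¹' sets p := by
      ext ω
      simp only [Set.mem_preimage, Set.mem_pi, Set.mem_univ, forall_true_left, Set.mem_iInter,
        Finset.mem_map, hemb, Function.Embedding.coeFn_mk, forall_exists_index, and_imp]
      constructor
      · rintro h p q hq rfl
        simp only [hsets, Set.mem_iInter, Set.mem_preimage]
        intro hq'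
        exact h ⟨q, hq'⟩
      · intro h q
        have h2 := h (t, q.1) q.1 q.2 rfl
        simp only [hsets, Set.mem_iInter, Set.mem_preimage] at h2
        exact h2 q.2
    rw [hpre, hMindep.measure_inter_preimage_eq_mul (s.map emb)
      (fun p _ => hsetsmeas p), Finset.prod_map]
    have hfac : ∀ q ∈ s, μ ((fun ω => M (emb q).1 (emb q).2.1 (emb q).2.2 ω) ⁻¹' sets (emb q))
        = ν (sets (t, q)) := by
      intro q hq
      have hm := Measure.map_apply (μ := μ) (hMmeas t q.1 q.2) (hsetsmeas (t, q))
      rw [hMlaw] at hm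
      exact hm.symm
    rw [Finset.prod_congr rfl hfac]
    have hcollapse : ∀ q : s, sets (t, (q : Fin lam × ℕ)) = B q := by
      intro q
      simp only [hsets]
      ext x
      simp only [Set.mem_iInter]
      exact ⟨fun h => h q.2, fun h h' => h⟩
    calc ∏ q ∈ s, ν (sets (t, q)) = ∏ q ∈ s.attach, ν (sets (t, (q : Fin lam × ℕ))) :=
          (Finset.prod_attach s fun q => ν (sets (t, q))).symm
      _ = ∏ q : s, ν (B q) := by
          rw [← Finset.univ_eq_attach]
          exact Finset.prod_congr rfl fun q _ => by rw [hcollapse q]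
  have hlawW : ∀ t : ℕ, μ.map (W t) = P := by
    intro t
    have h1 : IsProbabilityMeasure (μ.map (W t)) :=
      Measure.isProbabilityMeasure_map (hWmeas t).aemeasurable
    refine ext_of_generate_finite
      (measurableCylinders (fun _ : Fin lam × ℕ => Fin d → ℝ))
      generateFrom_measurableCylinders.symm isPiSystem_measurableCylinders
      (fun S hS => ?_) (by simp [measure_univ])
    obtain ⟨s, S', hS', rfl⟩ := (mem_measurableCylinders _).1 hS
    rw [hP, Measure.map_apply (hWmeas t) hS'.cylinder,
      Measure.map_apply (hWmeas 1) hS'.cylinder]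
    have hc : ∀ t' : ℕ, W t' ⁻¹' cylinder s S'
        = (fun ω => fun q : s => M t' (q : Fin lam × ℕ).1 (q : Fin lam × ℕ).2 ω) ⁻¹' S' :=
      fun t' => rfl
    rw [hc t, hc 1, ← Measure.map_apply (htupmeas t s) hS',
      ← Measure.map_apply (htupmeas 1 s) hS', htup t s, htup 1 s]
  -- conclusion
  refine ⟨κ, hκmarkov, ?_⟩
  intro t ht A hA
  set mm : ℕ → MeasurableSpace Ω := fun t' =>
    ⨆ s ∈ Set.Icc 1 t', MeasurableSpace.comap (D s) inferInstance with hmm_def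
  have hm_le_mc : (mm t) ≤ mc t :=
    iSup₂_le fun s hs => Measurable.comap_le (hDble t s hs.1 hs.2)
  have hm : (mm t) ≤ mΩ := iSup₂_le fun s hs => (hDmeas s hs.1).comap_le
  haveI : SigmaFinite (μ.trim hm) := by infer_instance
  have hindep_m : Indep (mm t) (MeasurableSpace.comap (W t) inferInstance) μ :=
    indep_of_indep_of_le_right (indep_of_indep_of_le_left ((hblock t).symm) hm_le_mc) (hWle t)
  -- the vector of all past normalized distances
  set V : Ω → (Fin t → ℝ) := fun ω k => D (k.1+1) ω with hV
  have hVmeas : Measurable[mΩ] V := measurable_pi_lambda _ fun k => hDmeas (k.1+1) (by omega)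
  have hDin : ∀ k : Fin t, MeasurableSpace.comap (D (k.1+1)) inferInstance ≤ (mm t) :=
    fun k => le_biSup (fun s => MeasurableSpace.comap (D s) inferInstance)
      (Set.mem_Icc.2 ⟨by omega, by omega⟩)
  have hcomapV : MeasurableSpace.comap V inferInstance ≤ (mm t) := by
    apply Measurable.comap_le
    exact measurable_pi_lambda' _ fun k =>
      (measurable_iff_comap_le.2 (hDin k) : Measurable[(mm t)] (D (k.1+1)))
  have hm_le_comapV : (mm t) ≤ MeasurableSpace.comap V inferInstance := by
    refine iSup₂_le fun s hs => ?_
    have hsub : (s - 1) + 1 = s := by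
      have := hs.1
      omega
    have hDeq : D s = (fun v : Fin t → ℝ => v ⟨s-1, by
        have h1 := hs.1
        have h2 := hs.2
        omega⟩) ∘ V := by
      funext ω
      show D s ω = D ((s-1)+1) ω
      rw [hsub]
    rw [hDeq, ← MeasurableSpace.comap_comp]
    exact MeasurableSpace.comap_mono (measurable_pi_apply _).comap_le
  have hVW : IndepFun V (W t) μ := by
    have h := indep_of_indep_of_le_left hindep_m hcomapV
    exact h
  have hlawU : μ.map (fun ω => (V ω, W t ω)) = (μ.map V).prod P := by
    rw [← hlawW t]
    exact (indepFun_iff_map_prod_eq_prod_map_map hVmeas.aemeasurable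
      (hWmeas t).aemeasurable).1 hVW
  set lastk : Fin t := ⟨t-1, by omega⟩ with hlast
  have hVlast : ∀ ω, V ω lastk = D t ω := by
    intro ω
    show D ((t-1)+1) ω = D t ω
    congr 1
    omega
  set f : Ω → ℝ := fun ω => Set.indicator A (fun _ => (1:ℝ)) (D (t+1) ω) with hf
  have hfind : f = Set.indicator (D (t+1) ⁻¹' A) (fun _ => (1:ℝ)) := by
    funext ω
    simp only [hf, Set.indicator_apply, Set.mem_preimage]
  have hDt1meas : Measurable (D (t+1)) := hDmeas (t+1) (by omega)
  have hfint : Integrable f μ := by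
    rw [hfind]
    exact (integrable_const (1:ℝ)).indicator (hDt1meas hA)
  set gfun : Ω → ℝ := fun ω => (κ (D t ω) A).toReal with hgfun
  have hDtm : Measurable[(mm t)] (D t) := measurable_iff_comap_le.2
    (le_biSup (fun s => MeasurableSpace.comap (D s) inferInstance) (Set.mem_Icc.2 ⟨ht, le_rfl⟩))
  have hgm : Measurable[(mm t)] gfun := ((Kernel.measurable_coe κ hA).comp hDtm).ennreal_toReal
  have hgsm : StronglyMeasurable[(mm t)] gfun := hgm.stronglyMeasurable
  have hgbound : ∀ ω, ‖gfun ω‖ ≤ 1 := by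
    intro ω
    rw [hgfun, Real.norm_of_nonneg ENNReal.toReal_nonneg]
    haveI := hκmarkov
    simpa using ENNReal.toReal_mono ENNReal.one_ne_top (prob_le_one (μ := κ (D t ω)) (s := A))
  have hgint : Integrable gfun μ := by
    refine Integrable.mono' (integrable_const (1:ℝ)) ?_ (Filter.Eventually.of_forall hgbound)
    exact (hgm.mono hm le_rfl).aestronglyMeasurable
  have hg_int_finite : ∀ S, MeasurableSet[(mm t)] S → μ S < ⊤ → IntegrableOn gfun S μ :=
    fun S _ _ => hgint.integrableOn
  have hUmeas : Measurable fun ω => (V ω, W t ω) := hVmeas.prodMk (hWmeas t)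
  have hg_eq : ∀ S, MeasurableSet[(mm t)] S → μ S < ⊤ →
      ∫ x in S, gfun x ∂μ = ∫ x in S, f x ∂μ := by
    intro S hS _
    obtain ⟨B, hB, rfl⟩ := MeasurableSpace.measurableSet_comap.1 (hm_le_comapV S hS)
    have hRHS : ∫ x in V ⁻¹' B, f x ∂μ = (μ ((D (t+1) ⁻¹' A) ∩ V ⁻¹' B)).toReal := by
      rw [hfind, integral_indicator_const (1:ℝ) (hDt1meas hA),
        measureReal_def, Measure.restrict_apply (hDt1meas hA), smul_eq_mul, mul_one]
    have hLHS : ∫ x in V ⁻¹' B, gfun x ∂μ = (∫⁻ x in V ⁻¹' B, κ (D t x) A ∂μ).toReal := by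
      rw [hgfun]
      have hκD : Measurable fun ω => κ (D t ω) A :=
        (Kernel.measurable_coe κ hA).comp (hDmeas t ht)
      exact integral_toReal hκD.aemeasurable
        (Filter.Eventually.of_forall fun ω => lt_of_le_of_lt prob_le_one ENNReal.one_lt_top)
    have hkey : μ ((D (t+1) ⁻¹' A) ∩ V ⁻¹' B) = ∫⁻ x in V ⁻¹' B, κ (D t x) A ∂μ := by
      set C : Set ((Fin t → ℝ) × E d lam) := {p | Gc (p.1 lastk, p.2) ∈ A ∧ p.1 ∈ B} with hCdef
      have hCmeas : MeasurableSet C :=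
        ((hGcmeas.comp (((measurable_pi_apply lastk).comp measurable_fst).prodMk
          measurable_snd)) hA).inter (measurable_fst hB)
      have hev : (D (t+1) ⁻¹' A) ∩ V ⁻¹' B = (fun ω => (V ω, W t ω)) ⁻¹' C := by
        ext ω
        simp only [Set.mem_inter_iff, Set.mem_preimage, hCdef, Set.mem_setOf_eq]
        constructor
        · rintro ⟨h1, h2⟩
          refine ⟨?_, h2⟩
          rw [hVlast ω, ← hDrec t ht ω]
          exact h1
        · rintro ⟨h1, h2⟩
          refine ⟨?_, h2⟩
          rw [hDrec t ht ω, ← hVlast ω]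
          exact h1
      rw [hev, ← Measure.map_apply hUmeas hCmeas, hlawU, Measure.prod_apply hCmeas]
      have hslice : ∀ v : Fin t → ℝ, P (Prod.mk v ⁻¹' C)
          = B.indicator (fun v => κ (v lastk) A) v := by
        intro v
        by_cases hv : v ∈ B
        · rw [Set.indicator_of_mem hv, hκ_apply (v lastk) A hA]
          congr 1
          ext w
          simp [hCdef, hv]
        · rw [Set.indicator_of_notMem hv]
          have hempty : Prod.mk v ⁻¹' C = ∅ := by
            ext w
            simp [hCdef, hv]
          rw [hempty, measure_empty]
      have hκv : Measurable fun v : Fin t → ℝ => κ (v lastk) A :=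
        (Kernel.measurable_coe κ hA).comp (measurable_pi_apply lastk)
      rw [lintegral_congr hslice, lintegral_indicator hB, Measure.restrict_map hVmeas hB,
        lintegral_map hκv hVmeas]
      exact lintegral_congr fun ω => by rw [hVlast ω]
    rw [hLHS, hRHS, hkey]
  exact (ae_eq_condExp_of_forall_setIntegral_eq hm hfint hg_int_finite hg_eq
    hgsm.aestronglyMeasurable).symm
end

section
/- Let λ ≥ 2, n ∈ ℝ² nonzero, H a law on ℝ² with continuous, strictly positive density h, and for δ > 0 let h*_δ(x) = λ·(h(x)𝟙_{L_δ}(x)/H(L_δ))·H_δ((−∞,[x]_1)×ℝ)^{λ−1} and c_δ(x) = δ − n^⊤x. Then for every bounded continuous function f : ℝ → ℝ with |f| ≤ M_f, the function T f : ℝ_+ → ℝ defined by (T f)(δ) = ∫_{ℝ²} f(c_δ(x)) h*_δ(x) dx is continuous on ℝ_+ and satisfies |(T f)(δ)| ≤ M_f / H(L_0) for all δ > 0. (In particular the normalized-distance chain is weak Feller.) -/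
open MeasureTheory

open scoped ENNReal NNReal

section Aux
open Set

lemma upset_bound (m : Measure ℝ) [IsProbabilityMeasure m] (s : ℝ) :
    m {a : ℝ | s < (m (Set.Iio a)).toReal} ≤ ENNReal.ofReal (1 - s) := by
  set S := {a : ℝ | s < (m (Set.Iio a)).toReal} with hSdef
  have hup : ∀ x ∈ S, ∀ y, x ≤ y → y ∈ S := by
    intro x hx y hxy
    exact lt_of_lt_of_le hx (ENNReal.toReal_mono (measure_ne_top m _)
      (measure_mono (Set.Iio_subset_Iio hxy)))
  have hIci : ∀ x ∈ S, m (Set.Ici x) ≤ ENNReal.ofReal (1 - s) := by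
    intro x hx
    have h1 : m (Set.Ici x) = 1 - m (Set.Iio x) := by
      rw [← Set.compl_Iio]; exact prob_compl_eq_one_sub measurableSet_Iio
    have h2 : (m (Set.Ici x)).toReal = 1 - (m (Set.Iio x)).toReal := by
      rw [h1, ENNReal.toReal_sub_of_le prob_le_one ENNReal.one_ne_top, ENNReal.toReal_one]
    calc m (Set.Ici x) = ENNReal.ofReal (m (Set.Ici x)).toReal :=
          (ENNReal.ofReal_toReal (measure_ne_top m _)).symm
      _ ≤ ENNReal.ofReal (1 - s) := by
          apply ENNReal.ofReal_le_ofReal; rw [h2]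
          have : s < (m (Set.Iio x)).toReal := hx
          linarith
  rcases Set.eq_empty_or_nonempty S with hS | ⟨x0, hx0⟩
  · rw [hS]; simp
  by_cases hbd : BddBelow S
  · set q := sInf S with hq
    by_cases hqS : q ∈ S
    · refine le_trans (measure_mono fun y hy => ?_) (hIci q hqS)
      exact csInf_le hbd hy
    · have hSsub : S ⊆ Set.Ioi q := by
        intro y hy
        rcases lt_or_eq_of_le (csInf_le hbd hy) with h | h
        · exact h
        · rw [← h] at hy; exact absurd hy hqS
      refine le_trans (measure_mono hSsub) ?_
      have hU : Set.Ioi q = ⋃ n : ℕ, Set.Ici (q + 1 / (n + 1)) := by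
        ext y
        simp only [Set.mem_Ioi, Set.mem_iUnion, Set.mem_Ici]
        constructor
        · intro hy
          obtain ⟨n, hn⟩ := exists_nat_one_div_lt (sub_pos.mpr hy)
          exact ⟨n, by push_cast at hn ⊢; linarith⟩
        · intro ⟨n, hn⟩
          have : (0:ℝ) < 1 / (n + 1) := by positivity
          linarith
      rw [hU, Directed.measure_iUnion]
      · refine iSup_le fun n => ?_
        have hlt : q < q + 1 / (n + 1) := by
          have : (0:ℝ) < 1 / (n + 1) := by positivity
          linarith
        obtain ⟨x, hxS, hxlt⟩ := (csInf_lt_iff hbd ⟨x0, hx0⟩).mp hlt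
        exact le_trans (measure_mono fun y hy => le_of_lt (lt_of_lt_of_le hxlt hy)) (hIci x hxS)
      · refine (monotone_nat_of_le_succ fun n => Set.Ici_subset_Ici.mpr ?_).directed_le
        have h1 : (1:ℝ) / (↑(n+1) + 1) ≤ 1 / (↑n + 1) := by
          apply div_le_div_of_nonneg_left
          · norm_num
          · positivity
          · push_cast; linarith
        linarith
  · have key : ∀ b : ℝ, m (Set.Ici b) ≤ ENNReal.ofReal (1 - s) := by
      intro b
      have : ∃ x ∈ S, x < b := by
        by_contra hc
        push_neg at hc
        exact hbd ⟨b, fun y hy => le_of_not_gt fun hlt => absurd hlt (not_lt.mpr (hc y hy))⟩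
      obtain ⟨x, hxS, hxb⟩ := this
      exact le_trans (measure_mono fun y hy => le_of_lt (lt_of_lt_of_le hxb hy)) (hIci x hxS)
    have huniv : (Set.univ : Set ℝ) = ⋃ n : ℕ, Set.Ici (-(n:ℝ)) := by
      ext y
      simp only [Set.mem_univ, true_iff, Set.mem_iUnion, Set.mem_Ici]
      obtain ⟨n, hn⟩ := exists_nat_ge (-y)
      exact ⟨n, by linarith⟩
    calc m S ≤ m Set.univ := measure_mono (Set.subset_univ _)
      _ ≤ ENNReal.ofReal (1 - s) := by
          rw [huniv, Directed.measure_iUnion]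
          · exact iSup_le fun n => key _
          · exact (monotone_nat_of_le_succ fun n => Set.Ici_subset_Ici.mpr (by
              push_cast; linarith)).directed_le
lemma cdf_pow_integral_le (m : Measure ℝ) [IsProbabilityMeasure m] (k : ℕ) (hk : 1 ≤ k) :
    ∫ t, ((m (Set.Iio t)).toReal) ^ k ∂m ≤ 1 / (k + 1) := by
  set F : ℝ → ℝ := fun t => (m (Set.Iio t)).toReal with hF
  have hFmono : Monotone F := fun a b hab =>
    ENNReal.toReal_mono (measure_ne_top m _) (measure_mono (Set.Iio_subset_Iio hab))
  have hFmeas : Measurable F := hFmono.measurable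
  have hF01 : ∀ t, 0 ≤ F t ∧ F t ≤ 1 :=
    fun t => ⟨ENNReal.toReal_nonneg, by
      simpa using ENNReal.toReal_mono ENNReal.one_ne_top (prob_le_one (μ := m) (s := Set.Iio t))⟩
  have hknR : (0:ℝ) < k := by exact_mod_cast hk
  have hg_nonneg : ∀ t, 0 ≤ F t ^ k := fun t => pow_nonneg (hF01 t).1 k
  have hgmeas : Measurable fun t => F t ^ k := hFmeas.pow_const k
  -- rewrite as lintegral
  have h1 : ∫ t, F t ^ k ∂m = (∫⁻ t, ENNReal.ofReal (F t ^ k) ∂m).toReal := by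
    rw [integral_eq_lintegral_of_nonneg_ae (Filter.Eventually.of_forall hg_nonneg)
      hgmeas.aestronglyMeasurable]
  -- layer cake
  have h2 : ∫⁻ t, ENNReal.ofReal (F t ^ k) ∂m =
      ∫⁻ s in Set.Ioi (0:ℝ), m {a | s < F a ^ k} :=
    lintegral_eq_lintegral_meas_lt m (Filter.Eventually.of_forall hg_nonneg)
      hgmeas.aemeasurable
  -- pointwise bound on the tail measures
  have h3 : ∀ s ∈ Set.Ioi (0:ℝ), m {a | s < F a ^ k} ≤
      ENNReal.ofReal (1 - s ^ ((1:ℝ)/k)) := by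
    intro s hs
    rw [Set.mem_Ioi] at hs
    have hset : {a | s < F a ^ k} = {a | s ^ ((1:ℝ)/k) < F a} := by
      ext a
      simp only [Set.mem_setOf_eq]
      constructor
      · intro hlt
        have h0 : (0:ℝ) ≤ s := le_of_lt hs
        have := Real.rpow_lt_rpow h0 hlt (by positivity : (0:ℝ) < 1/k)
        rwa [← Real.rpow_natCast (F a) k, ← Real.rpow_mul (hF01 a).1,
          mul_one_div_cancel (ne_of_gt hknR), Real.rpow_one] at this
      · intro hlt
        have h0 : (0:ℝ) ≤ s ^ ((1:ℝ)/k) := Real.rpow_nonneg (le_of_lt hs) _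
        have := pow_lt_pow_left₀ hlt h0 (by omega : k ≠ 0)
        rwa [← Real.rpow_natCast (s ^ ((1:ℝ)/k)) k, ← Real.rpow_mul (le_of_lt hs),
          one_div_mul_cancel (ne_of_gt hknR), Real.rpow_one] at this
    rw [hset]
    exact upset_bound m _
  -- bound the layer cake integral
  have hbcont : Continuous fun s : ℝ => 1 - s ^ ((1:ℝ)/k) :=
    continuous_const.sub (Real.continuous_rpow_const (by positivity))
  have h4 : ∫⁻ s in Set.Ioi (0:ℝ), m {a | s < F a ^ k} ≤
      ∫⁻ s in Set.Ioi (0:ℝ), ENNReal.ofReal (1 - s ^ ((1:ℝ)/k)) :=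
    setLIntegral_mono hbcont.measurable.ennreal_ofReal h3
  have h5 : ∫⁻ s in Set.Ioi (0:ℝ), ENNReal.ofReal (1 - s ^ ((1:ℝ)/k))
      = ∫⁻ s in Set.Ioc (0:ℝ) 1, ENNReal.ofReal (1 - s ^ ((1:ℝ)/k)) := by
    rw [← Set.Ioc_union_Ioi_eq_Ioi (by norm_num : (0:ℝ) ≤ 1),
      lintegral_union measurableSet_Ioi (Set.Ioc_disjoint_Ioi le_rfl)]
    have hz : ∫⁻ s in Set.Ioi (1:ℝ), ENNReal.ofReal (1 - s ^ ((1:ℝ)/k)) = 0 := by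
      rw [setLIntegral_congr_fun measurableSet_Ioi
        (fun s hs => ?_), lintegral_zero]
      have h1s : (1:ℝ) ≤ s ^ ((1:ℝ)/k) := by
        have := Real.rpow_le_rpow (by norm_num : (0:ℝ) ≤ 1)
          (le_of_lt (Set.mem_Ioi.mp hs)) (by positivity : (0:ℝ) ≤ 1/k)
        rwa [Real.one_rpow] at this
      exact ENNReal.ofReal_eq_zero.mpr (by linarith)
    rw [hz, add_zero]
  have hnn : ∀ s ∈ Set.Ioc (0:ℝ) 1, 0 ≤ 1 - s ^ ((1:ℝ)/k) := by
    intro s hs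
    have : s ^ ((1:ℝ)/k) ≤ 1 :=
      Real.rpow_le_one (le_of_lt hs.1) hs.2 (by positivity)
    linarith
  have hInt : IntegrableOn (fun s : ℝ => 1 - s ^ ((1:ℝ)/k)) (Set.Ioc (0:ℝ) 1) volume :=
    hbcont.integrableOn_Ioc
  have h6 : ∫⁻ s in Set.Ioc (0:ℝ) 1, ENNReal.ofReal (1 - s ^ ((1:ℝ)/k))
      = ENNReal.ofReal (∫ s in Set.Ioc (0:ℝ) 1, (1 - s ^ ((1:ℝ)/k))) :=
    (ofReal_integral_eq_lintegral_ofReal hInt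
      ((ae_restrict_iff' measurableSet_Ioc).mpr (Filter.Eventually.of_forall hnn))).symm
  have hpos1k : (0:ℝ) < 1/k := by positivity
  have h7 : ∫ s in Set.Ioc (0:ℝ) 1, (1 - s ^ ((1:ℝ)/k)) = 1/(k+1) := by
    rw [← intervalIntegral.integral_of_le (by norm_num : (0:ℝ) ≤ 1),
      intervalIntegral.integral_sub intervalIntegrable_const
        (intervalIntegral.intervalIntegrable_rpow (Or.inl (by linarith))),
      intervalIntegral.integral_const, integral_rpow (Or.inl (by linarith)),
      Real.one_rpow, Real.zero_rpow (by positivity)]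
    have hk0 : (k:ℝ) ≠ 0 := ne_of_gt hknR
    field_simp
    ring
  rw [h1]
  have hle : (∫⁻ t, ENNReal.ofReal (F t ^ k) ∂m) ≤ ENNReal.ofReal (1/(k+1)) := by
    rw [h2]; exact h4.trans (le_of_eq (by rw [h5, h6, h7]))
  calc (∫⁻ t, ENNReal.ofReal (F t ^ k) ∂m).toReal
      ≤ (ENNReal.ofReal (1/(k+1))).toReal := ENNReal.toReal_mono ENNReal.ofReal_ne_top hle
    _ = 1/(k+1) := ENNReal.toReal_ofReal (by positivity)
lemma null_line (n : ℝ × ℝ) (hn : n ≠ 0) (c : ℝ) :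
    volume {y : ℝ × ℝ | n.1 * y.1 + n.2 * y.2 = c} = 0 := by
  have hmeas : MeasurableSet {y : ℝ × ℝ | n.1 * y.1 + n.2 * y.2 = c} :=
    measurableSet_eq_fun (by fun_prop) measurable_const
  by_cases h2 : n.2 = 0
  · have h1 : n.1 ≠ 0 := fun h1 => hn (Prod.ext h1 h2)
    have : {y : ℝ × ℝ | n.1 * y.1 + n.2 * y.2 = c} = {c / n.1} ×ˢ (Set.univ : Set ℝ) := by
      ext y
      simp only [Set.mem_setOf_eq, Set.mem_prod, Set.mem_singleton_iff, Set.mem_univ, and_true, h2]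
      constructor
      · intro hy; field_simp; linarith
      · intro hy; rw [hy]; field_simp; ring
    rw [this, Measure.volume_eq_prod, Measure.prod_prod]
    simp
  · rw [Measure.volume_eq_prod, Measure.prod_apply hmeas]
    have : ∀ x : ℝ, (Prod.mk x ⁻¹' {y : ℝ × ℝ | n.1 * y.1 + n.2 * y.2 = c}) = {(c - n.1 * x) / n.2} := by
      intro x
      ext y
      simp only [Set.mem_preimage, Set.mem_setOf_eq, Set.mem_singleton_iff]
      constructor
      · intro hy; field_simp; linarith
      · intro hy; rw [hy]; field_simp; ring
    simp only [this]
    simp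

end Aux

abbrev Lset (n : ℝ × ℝ) (δ : ℝ) : Set (ℝ × ℝ) := {y : ℝ × ℝ | n.1 * y.1 + n.2 * y.2 < δ}

/-- The transition operator `T f(δ) = ∫ f(δ − n^⊤x) h*_δ(x) dx` of the
normalized-distance chain maps every bounded continuous `f : ℝ → ℝ` with `|f| ≤ M_f`
to a function that is continuous on `(0,∞)` and bounded by `M_f / H(L_0)`; in
particular the chain is weak Feller. -/
theorem transition_operator_weak_feller
    (lam : ℕ) (hlam : 2 ≤ lam)
    (n : ℝ × ℝ) (hn : n ≠ 0)
    (h : ℝ × ℝ → ℝ) (hh : Continuous h) (hpos : ∀ x, 0 < h x)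
    (H : Measure (ℝ × ℝ)) [IsProbabilityMeasure H]
    (hH : H = volume.withDensity (fun x => ENNReal.ofReal (h x)))
    -- the selected-movement density h*_δ
    (hstar : ℝ → ℝ × ℝ → ℝ)
    (hhstar : ∀ δ x, hstar δ x =
      (lam : ℝ) *
        (Set.indicator {y : ℝ × ℝ | n.1 * y.1 + n.2 * y.2 < δ} h x /
          (H {y : ℝ × ℝ | n.1 * y.1 + n.2 * y.2 < δ}).toReal) *
        ((H {y : ℝ × ℝ | n.1 * y.1 + n.2 * y.2 < δ ∧ y.1 < x.1}).toReal /
          (H {y : ℝ × ℝ | n.1 * y.1 + n.2 * y.2 < δ}).toReal) ^ (lam - 1)) :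
    ∀ f : ℝ → ℝ, Continuous f → ∀ Mf : ℝ, (∀ u, |f u| ≤ Mf) →
      ContinuousOn
        (fun δ => ∫ x : ℝ × ℝ, f (δ - (n.1 * x.1 + n.2 * x.2)) * hstar δ x)
        (Set.Ioi 0) ∧
      ∀ δ : ℝ, 0 < δ →
        |∫ x : ℝ × ℝ, f (δ - (n.1 * x.1 + n.2 * x.2)) * hstar δ x| ≤
          Mf / (H {y : ℝ × ℝ | n.1 * y.1 + n.2 * y.2 < 0}).toReal := by
  intro f hf Mf hMf
  have hMf0 : 0 ≤ Mf := le_trans (abs_nonneg _) (hMf 0)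
  have hφc : Continuous fun y : ℝ × ℝ => n.1 * y.1 + n.2 * y.2 := by fun_prop
  have hLmeas : ∀ δ, MeasurableSet (Lset n δ) := fun δ =>
    measurableSet_lt hφc.measurable measurable_const
  have hfin : ∀ s : Set (ℝ × ℝ), H s ≠ ⊤ := fun s => measure_ne_top H s
  have hHle1 : ∀ s : Set (ℝ × ℝ), (H s).toReal ≤ 1 := fun s => by
    simpa using ENNReal.toReal_mono ENNReal.one_ne_top (prob_le_one (μ := H) (s := s))
  -- positivity of H on the halfplanes
  have hLpos : ∀ δ, 0 < (H (Lset n δ)).toReal := by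
    intro δ
    have hne : (Lset n δ).Nonempty := by
      have hor : n.1 ≠ 0 ∨ n.2 ≠ 0 := by
        by_contra hc; push_neg at hc; exact hn (Prod.ext hc.1 hc.2)
      rcases hor with h1 | h2
      · refine ⟨((δ - 1) / n.1, 0), ?_⟩
        show n.1 * ((δ - 1) / n.1) + n.2 * 0 < δ
        field_simp; linarith
      · refine ⟨(0, (δ - 1) / n.2), ?_⟩
        show n.1 * 0 + n.2 * ((δ - 1) / n.2) < δ
        field_simp; linarith
    have hopen : IsOpen (Lset n δ) := isOpen_lt hφc continuous_const
    have hvol : 0 < volume (Lset n δ) := hopen.measure_pos volume hne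
    have hHpos : 0 < H (Lset n δ) := by
      rw [hH, withDensity_apply _ (hLmeas δ)]
      rw [lintegral_pos_iff_support hh.measurable.ennreal_ofReal]
      have hsupp : (Function.support fun y => ENNReal.ofReal (h y)) = Set.univ :=
        Set.eq_univ_of_forall fun y => by
          simp [Function.mem_support, ENNReal.ofReal_eq_zero, not_le, hpos y]
      rw [hsupp, Measure.restrict_apply_univ]
      exact hvol
    exact ENNReal.toReal_pos (ne_of_gt hHpos) (hfin _)
  have hLmono : ∀ {δ δ' : ℝ}, δ ≤ δ' → (H (Lset n δ)).toReal ≤ (H (Lset n δ')).toReal :=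
    fun {δ δ'} hdd => ENNReal.toReal_mono (hfin _)
      (measure_mono fun y hy => lt_of_lt_of_le hy hdd)
  -- integral representation of H
  have hInt_h : Integrable h volume := by
    refine ⟨hh.aestronglyMeasurable, ?_⟩
    rw [hasFiniteIntegral_iff_norm]
    have : ∀ x : ℝ × ℝ, ENNReal.ofReal ‖h x‖ = ENNReal.ofReal (h x) := fun x => by
      rw [Real.norm_eq_abs, abs_of_nonneg (hpos x).le]
    simp only [this]
    have huniv : (∫⁻ x, ENNReal.ofReal (h x) ∂volume) = H Set.univ := by
      rw [hH, ← setLIntegral_univ, ← withDensity_apply _ MeasurableSet.univ]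
    rw [huniv, measure_univ]
    exact ENNReal.one_lt_top
  have hHrepr : ∀ s : Set (ℝ × ℝ), MeasurableSet s →
      (H s).toReal = ∫ x, Set.indicator s h x ∂volume := by
    intro s hs
    rw [integral_indicator hs, hH, withDensity_apply _ hs,
      integral_eq_lintegral_of_nonneg_ae
        (Filter.Eventually.of_forall fun x => (hpos x).le) hh.aestronglyMeasurable.restrict]
  -- a.e. avoidance of the boundary line
  have hae : ∀ c : ℝ, ∀ᵐ x : ℝ × ℝ ∂volume, ¬(n.1 * x.1 + n.2 * x.2 = c) := by
    intro c
    rw [ae_iff]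
    simpa using null_line n hn c
  -- continuity of δ ↦ H(L_δ ∩ A)
  have hcontH : ∀ A : Set (ℝ × ℝ), MeasurableSet A →
      Continuous fun δ => (H (Lset n δ ∩ A)).toReal := by
    intro A hA
    rw [continuous_iff_continuousAt]
    intro δ₀
    have hrepr : (fun δ => (H (Lset n δ ∩ A)).toReal)
        = fun δ => ∫ x, Set.indicator (Lset n δ ∩ A) h x ∂volume :=
      funext fun δ => hHrepr _ ((hLmeas δ).inter hA)
    rw [hrepr]
    apply continuousAt_of_dominated (bound := h)
    · exact Filter.Eventually.of_forall fun δ =>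
        (hh.measurable.indicator ((hLmeas δ).inter hA)).aestronglyMeasurable
    · refine Filter.Eventually.of_forall fun δ => Filter.Eventually.of_forall fun x => ?_
      rw [Real.norm_eq_abs]
      by_cases hx : x ∈ Lset n δ ∩ A
      · rw [Set.indicator_of_mem hx, abs_of_nonneg (hpos x).le]
      · rw [Set.indicator_of_notMem hx]; simpa using (hpos x).le
    · exact hInt_h
    · filter_upwards [hae δ₀] with x hx
      rcases lt_or_gt_of_ne hx with hlt | hgt
      · apply Filter.EventuallyEq.continuousAt (y := Set.indicator A h x)
        filter_upwards [Ioi_mem_nhds hlt] with δ hδ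
        by_cases hxA : x ∈ A
        · rw [Set.indicator_of_mem (show x ∈ Lset n δ ∩ A from ⟨Set.mem_Ioi.mp hδ, hxA⟩),
            Set.indicator_of_mem hxA]
        · rw [Set.indicator_of_notMem (show x ∉ Lset n δ ∩ A from fun hc => hxA hc.2),
            Set.indicator_of_notMem hxA]
      · apply Filter.EventuallyEq.continuousAt (y := 0)
        filter_upwards [Iio_mem_nhds hgt] with δ hδ
        exact Set.indicator_of_notMem
          (show x ∉ Lset n δ ∩ A from
            fun hc => absurd hc.1 (not_lt.mpr (Set.mem_Iio.mp hδ).le)) _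
  -- convenient form of hstar
  have hstar_eq : ∀ δ x, hstar δ x =
      (lam : ℝ) * (Set.indicator (Lset n δ) h x / (H (Lset n δ)).toReal) *
        ((H (Lset n δ ∩ {y : ℝ × ℝ | y.1 < x.1})).toReal / (H (Lset n δ)).toReal)
          ^ (lam - 1) := by
    intro δ x
    rw [hhstar δ x]
    rfl
  have hρmono : ∀ δ, Monotone fun t : ℝ => (H (Lset n δ ∩ {y : ℝ × ℝ | y.1 < t})).toReal :=
    fun δ a b hab => ENNReal.toReal_mono (hfin _)
      (measure_mono (Set.inter_subset_inter_right _ fun y hy => lt_of_lt_of_le hy hab))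
  have hstar_meas : ∀ δ, AEStronglyMeasurable (hstar δ) volume := by
    intro δ
    have heq : hstar δ = fun x =>
        (lam : ℝ) * (Set.indicator (Lset n δ) h x / (H (Lset n δ)).toReal) *
          ((H (Lset n δ ∩ {y : ℝ × ℝ | y.1 < x.1})).toReal / (H (Lset n δ)).toReal)
            ^ (lam - 1) := funext (hstar_eq δ)
    rw [heq]
    apply Measurable.aestronglyMeasurable
    exact (measurable_const.mul ((hh.measurable.indicator (hLmeas δ)).div_const _)).mul
      ((((hρmono δ).measurable.comp measurable_fst).div_const _).pow_const _)
  have hstar_nonneg : ∀ δ x, 0 ≤ hstar δ x := by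
    intro δ x
    rw [hstar_eq]
    have h1 : 0 ≤ Set.indicator (Lset n δ) h x :=
      Set.indicator_nonneg (fun y _ => (hpos y).le) x
    positivity
  have hstar_le : ∀ δ x, hstar δ x ≤ (lam : ℝ) * h x / (H (Lset n δ)).toReal := by
    intro δ x
    rw [hstar_eq]
    have hr1 : ((H (Lset n δ ∩ {y : ℝ × ℝ | y.1 < x.1})).toReal / (H (Lset n δ)).toReal)
        ^ (lam - 1) ≤ 1 := by
      apply pow_le_one₀ (by positivity)
      exact div_le_one_of_le₀
        (ENNReal.toReal_mono (hfin _) (measure_mono Set.inter_subset_left))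
        ENNReal.toReal_nonneg
    have hind : Set.indicator (Lset n δ) h x ≤ h x :=
      Set.indicator_le_self' (fun y _ => (hpos y).le) x
    have hindnn : 0 ≤ Set.indicator (Lset n δ) h x :=
      Set.indicator_nonneg (fun y _ => (hpos y).le) x
    calc (lam : ℝ) * (Set.indicator (Lset n δ) h x / (H (Lset n δ)).toReal) *
          ((H (Lset n δ ∩ {y : ℝ × ℝ | y.1 < x.1})).toReal / (H (Lset n δ)).toReal)
            ^ (lam - 1)
        ≤ (lam : ℝ) * (h x / (H (Lset n δ)).toReal) * 1 := by
          apply mul_le_mul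
          · apply mul_le_mul_of_nonneg_left _ (Nat.cast_nonneg lam)
            exact div_le_div_of_nonneg_right hind (hLpos δ).le
          · exact hr1
          · positivity
          · have := (hpos x).le; positivity
      _ = (lam : ℝ) * h x / (H (Lset n δ)).toReal := by ring
  have hstar_int : ∀ δ, Integrable (hstar δ) volume := by
    intro δ
    refine ((hInt_h.const_mul ((lam : ℝ))).div_const ((H (Lset n δ)).toReal)).mono'
      (hstar_meas δ) (Filter.Eventually.of_forall fun x => ?_)
    rw [Real.norm_eq_abs, abs_of_nonneg (hstar_nonneg δ x)]
    exact hstar_le δ x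
  have hint_F : ∀ δ, Integrable
      (fun x : ℝ × ℝ => f (δ - (n.1 * x.1 + n.2 * x.2)) * hstar δ x) volume := by
    intro δ
    refine ((hstar_int δ).const_mul Mf).mono'
      (((hf.comp (continuous_const.sub hφc)).aestronglyMeasurable).mul (hstar_meas δ))
      (Filter.Eventually.of_forall fun x => ?_)
    rw [Real.norm_eq_abs, abs_mul, abs_of_nonneg (hstar_nonneg δ x)]
    exact mul_le_mul_of_nonneg_right (hMf _) (hstar_nonneg δ x)
  -- total mass of hstar is at most one
  have hstar_total : ∀ δ : ℝ, ∫ x, hstar δ x ∂volume ≤ 1 := by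
    intro δ
    have hc0 : H (Lset n δ) ≠ 0 := (ENNReal.toReal_pos_iff.mp (hLpos δ)).1.ne'
    have hcT : H (Lset n δ) ≠ ⊤ := hfin _
    have hcne : (H (Lset n δ)).toReal ≠ 0 := (hLpos δ).ne'
    set μ' := (H (Lset n δ))⁻¹ • H.restrict (Lset n δ) with hμ'
    haveI : IsProbabilityMeasure μ' := ⟨by
      rw [hμ', Measure.smul_apply, Measure.restrict_apply_univ, smul_eq_mul,
        ENNReal.inv_mul_cancel hc0 hcT]⟩
    set m := μ'.map (fun y : ℝ × ℝ => y.1) with hm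
    haveI : IsProbabilityMeasure m := Measure.isProbabilityMeasure_map measurable_fst.aemeasurable
    have hFrepr : ∀ t : ℝ,
        (H (Lset n δ ∩ {y : ℝ × ℝ | y.1 < t})).toReal / (H (Lset n δ)).toReal
          = (m (Set.Iio t)).toReal := by
      intro t
      rw [hm, Measure.map_apply measurable_fst measurableSet_Iio]
      have hpre : ((fun y : ℝ × ℝ => y.1) ⁻¹' Set.Iio t) = {y : ℝ × ℝ | y.1 < t} := rfl
      rw [hpre, hμ', Measure.smul_apply,
        Measure.restrict_apply (measurableSet_lt measurable_fst measurable_const),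
        Set.inter_comm, smul_eq_mul, ENNReal.toReal_mul, ENNReal.toReal_inv]
      rw [div_eq_inv_mul]
    have hk1 : 1 ≤ lam - 1 := by omega
    have hrw : ∫ x, hstar δ x ∂volume = ((lam : ℝ) / (H (Lset n δ)).toReal) *
        ∫ x, Set.indicator (Lset n δ)
          (fun z : ℝ × ℝ => h z * ((m (Set.Iio z.1)).toReal) ^ (lam - 1)) x ∂volume := by
      rw [← integral_const_mul]
      congr 1
      funext x
      rw [hstar_eq δ x, hFrepr]
      by_cases hx : x ∈ Lset n δ
      · rw [Set.indicator_of_mem hx, Set.indicator_of_mem hx]; ring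
      · rw [Set.indicator_of_notMem hx, Set.indicator_of_notMem hx]; ring
    rw [hrw, integral_indicator (hLmeas δ)]
    have hmono_m : Monotone fun t : ℝ => (m (Set.Iio t)).toReal := fun a b hab =>
      ENNReal.toReal_mono (measure_ne_top m _) (measure_mono (Set.Iio_subset_Iio hab))
    have hmeasF : Measurable fun t : ℝ => ((m (Set.Iio t)).toReal) ^ (lam - 1) :=
      hmono_m.measurable.pow_const _
    have hwd : ∫ x in Lset n δ, h x * ((m (Set.Iio x.1)).toReal) ^ (lam - 1) ∂volume
        = ∫ x, ((m (Set.Iio x.1)).toReal) ^ (lam - 1) ∂(H.restrict (Lset n δ)) := by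
      rw [hH, restrict_withDensity (hLmeas δ)]
      have hden : (fun x : ℝ × ℝ => ENNReal.ofReal (h x))
          = fun x => ((h x).toNNReal : ℝ≥0∞) := rfl
      rw [hden, integral_withDensity_eq_integral_smul hh.measurable.real_toNNReal]
      congr 1
      funext x
      rw [NNReal.smul_def, smul_eq_mul, Real.coe_toNNReal _ (hpos x).le]
    have hsm : H.restrict (Lset n δ) = H (Lset n δ) • μ' := by
      rw [hμ', smul_smul, ENNReal.mul_inv_cancel hc0 hcT, one_smul]
    have hμ'int : ∫ x, ((m (Set.Iio x.1)).toReal) ^ (lam - 1) ∂(H.restrict (Lset n δ))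
        = (H (Lset n δ)).toReal * ∫ x, ((m (Set.Iio x.1)).toReal) ^ (lam - 1) ∂μ' := by
      rw [hsm, integral_smul_measure, smul_eq_mul]
    have hmap : ∫ x : ℝ × ℝ, ((m (Set.Iio x.1)).toReal) ^ (lam - 1) ∂μ'
        = ∫ t, ((m (Set.Iio t)).toReal) ^ (lam - 1) ∂m := by
      rw [hm, integral_map measurable_fst.aemeasurable hmeasF.aestronglyMeasurable]
    have hkey := cdf_pow_integral_le m (lam - 1) hk1
    rw [hwd, hμ'int, hmap]
    have hcast : (((lam - 1 : ℕ) : ℝ) + 1) = (lam : ℝ) := by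
      rw [Nat.cast_sub (by omega : 1 ≤ lam), Nat.cast_one]; ring
    have hlamR : (0:ℝ) < (lam : ℝ) := by exact_mod_cast (by omega : 0 < lam)
    calc (lam : ℝ) / (H (Lset n δ)).toReal *
          ((H (Lset n δ)).toReal * ∫ t, ((m (Set.Iio t)).toReal) ^ (lam - 1) ∂m)
        = (lam : ℝ) * ∫ t, ((m (Set.Iio t)).toReal) ^ (lam - 1) ∂m := by
          field_simp
      _ ≤ (lam : ℝ) * (1 / (((lam - 1 : ℕ) : ℝ) + 1)) :=
          mul_le_mul_of_nonneg_left hkey (Nat.cast_nonneg lam)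
      _ = 1 := by rw [hcast, mul_one_div_cancel hlamR.ne']
  constructor
  · -- continuity
    intro δ₀ hδ₀
    rw [Set.mem_Ioi] at hδ₀
    apply ContinuousAt.continuousWithinAt
    apply continuousAt_of_dominated
      (bound := fun x => Mf * ((lam : ℝ) * h x / (H (Lset n (δ₀ / 2))).toReal))
    · exact Filter.Eventually.of_forall fun δ =>
        ((hf.comp (continuous_const.sub hφc)).aestronglyMeasurable).mul (hstar_meas δ)
    · filter_upwards [Ioi_mem_nhds (by linarith : δ₀ / 2 < δ₀)] with δ hδ
      refine Filter.Eventually.of_forall fun x => ?_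
      rw [Real.norm_eq_abs, abs_mul, abs_of_nonneg (hstar_nonneg δ x)]
      calc |f (δ - (n.1 * x.1 + n.2 * x.2))| * hstar δ x
          ≤ Mf * ((lam : ℝ) * h x / (H (Lset n δ)).toReal) :=
            mul_le_mul (hMf _) (hstar_le δ x) (hstar_nonneg δ x) hMf0
        _ ≤ Mf * ((lam : ℝ) * h x / (H (Lset n (δ₀ / 2))).toReal) := by
            apply mul_le_mul_of_nonneg_left _ hMf0
            exact div_le_div_of_nonneg_left
              (by have := (hpos x).le; positivity) (hLpos _) (hLmono (le_of_lt hδ))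
    · exact ((hInt_h.const_mul _).div_const _).const_mul Mf
    · filter_upwards [hae δ₀] with x hx
      apply ContinuousAt.mul
      · exact (hf.comp (continuous_id.sub continuous_const)).continuousAt
      · have heq : (fun δ => hstar δ x) = fun δ =>
            (lam : ℝ) * (Set.indicator (Lset n δ) h x / (H (Lset n δ ∩ Set.univ)).toReal) *
              ((H (Lset n δ ∩ {y : ℝ × ℝ | y.1 < x.1})).toReal /
                (H (Lset n δ ∩ Set.univ)).toReal) ^ (lam - 1) := by
          funext δ
          rw [hstar_eq, Set.inter_univ]
        rw [heq]
        have hHd : ContinuousAt (fun δ => (H (Lset n δ ∩ Set.univ)).toReal) δ₀ :=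
          (hcontH Set.univ MeasurableSet.univ).continuousAt
        have hG : ContinuousAt
            (fun δ => (H (Lset n δ ∩ {y : ℝ × ℝ | y.1 < x.1})).toReal) δ₀ :=
          (hcontH {y : ℝ × ℝ | y.1 < x.1}
            (measurableSet_lt measurable_fst measurable_const)).continuousAt
        have hHd0 : (H (Lset n δ₀ ∩ Set.univ)).toReal ≠ 0 := by
          rw [Set.inter_univ]; exact (hLpos δ₀).ne'
        have hind : ContinuousAt (fun δ => Set.indicator (Lset n δ) h x) δ₀ := by
          rcases lt_or_gt_of_ne hx with hlt | hgt
          · apply Filter.EventuallyEq.continuousAt (y := h x)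
            filter_upwards [Ioi_mem_nhds hlt] with δ hδ
            exact Set.indicator_of_mem (show x ∈ Lset n δ from Set.mem_Ioi.mp hδ) h
          · apply Filter.EventuallyEq.continuousAt (y := 0)
            filter_upwards [Iio_mem_nhds hgt] with δ hδ
            exact Set.indicator_of_notMem
              (show x ∉ Lset n δ from
                fun hc => absurd hc (not_lt.mpr (Set.mem_Iio.mp hδ).le)) h
        exact (continuousAt_const.mul (hind.div hHd hHd0)).mul ((hG.div hHd hHd0).pow _)
  · -- the bound
    intro δ hδ
    have habs : |∫ x : ℝ × ℝ, f (δ - (n.1 * x.1 + n.2 * x.2)) * hstar δ x|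
        ≤ Mf * ∫ x, hstar δ x ∂volume := by
      calc |∫ x : ℝ × ℝ, f (δ - (n.1 * x.1 + n.2 * x.2)) * hstar δ x|
          = ‖∫ x : ℝ × ℝ, f (δ - (n.1 * x.1 + n.2 * x.2)) * hstar δ x‖ :=
            (Real.norm_eq_abs _).symm
        _ ≤ ∫ x : ℝ × ℝ, ‖f (δ - (n.1 * x.1 + n.2 * x.2)) * hstar δ x‖ :=
            norm_integral_le_integral_norm _
        _ ≤ Mf * ∫ x, hstar δ x ∂volume := ?_
      have hmm : Mf * ∫ x, hstar δ x ∂volume = ∫ x, Mf * hstar δ x ∂volume :=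
        (integral_const_mul Mf _).symm
      rw [hmm]
      apply integral_mono (hint_F δ).norm ((hstar_int δ).const_mul Mf)
      intro x
      show ‖f (δ - (n.1 * x.1 + n.2 * x.2)) * hstar δ x‖ ≤ Mf * hstar δ x
      rw [Real.norm_eq_abs, abs_mul, abs_of_nonneg (hstar_nonneg δ x)]
      exact mul_le_mul_of_nonneg_right (hMf _) (hstar_nonneg δ x)
    have h1 : Mf * ∫ x, hstar δ x ∂volume ≤ Mf :=
      mul_le_of_le_one_right hMf0 (hstar_total δ)
    have h2 : Mf ≤ Mf / (H (Lset n 0)).toReal := by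
      rw [le_div_iff₀ (hLpos 0)]
      exact mul_le_of_le_one_right hMf0 (hHle1 _)
    exact habs.trans (h1.trans h2)
end

section
/- Let λ ≥ 2, n ∈ ℝ² nonzero, H a law on ℝ² with continuous, strictly positive density h and finite first moment ∫_{ℝ²} |n^⊤x| h(x) dx < ∞, and for δ > 0 let h*_δ(x) = λ·(h(x)𝟙_{L_δ}(x)/H(L_δ))·H_δ((−∞,[x]_1)×ℝ)^{λ−1}. Then lim_{δ→+∞} ∫_{ℝ²} n^⊤x · h*_δ(x) dx = λ·∫_{ℝ²} n^⊤x · H((−∞,[x]_1)×ℝ)^{λ−1} h(x) dx. -/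
open MeasureTheory Filter Topology

/-- Measurability of the sliced-measure function. -/
lemma slice_measurable (H : Measure (ℝ × ℝ)) [IsProbabilityMeasure H] (s : Set (ℝ × ℝ)) :
    Measurable (fun x : ℝ × ℝ => (H (s ∩ {y : ℝ × ℝ | y.1 < x.1})).toReal) := by
  have hm : Monotone (fun t : ℝ => (H (s ∩ {y : ℝ × ℝ | y.1 < t})).toReal) := by
    intro a b hab
    exact ENNReal.toReal_mono (measure_ne_top H _)
      (measure_mono (fun y hy => ⟨hy.1, lt_of_lt_of_le hy.2 hab⟩))
  exact hm.measurable.comp measurable_fst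

/-- As `δ → +∞`, the mean of `n^⊤x` under the selected-movement
density `h*_δ` converges to `λ·∫ n^⊤x · H((−∞,[x]_1)×ℝ)^{λ−1} h(x) dx`, the asymptotic
mean one-step progress of the constant-step-size (1,λ) evolution strategy. -/
theorem mean_progress_limit
    (lam : ℕ) (hlam : 2 ≤ lam)
    (n : ℝ × ℝ) (hn : n ≠ 0)
    (h : ℝ × ℝ → ℝ) (hh : Continuous h) (hpos : ∀ x, 0 < h x)
    (H : Measure (ℝ × ℝ)) [IsProbabilityMeasure H]
    (hH : H = volume.withDensity (fun x => ENNReal.ofReal (h x)))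
    -- finite first moment of n^⊤x under h
    (hmom : Integrable (fun x : ℝ × ℝ => |n.1 * x.1 + n.2 * x.2| * h x))
    -- the selected-movement density h*_δ
    (hstar : ℝ → ℝ × ℝ → ℝ)
    (hhstar : ∀ δ x, hstar δ x =
      (lam : ℝ) *
        (Set.indicator {y : ℝ × ℝ | n.1 * y.1 + n.2 * y.2 < δ} h x /
          (H {y : ℝ × ℝ | n.1 * y.1 + n.2 * y.2 < δ}).toReal) *
        ((H {y : ℝ × ℝ | n.1 * y.1 + n.2 * y.2 < δ ∧ y.1 < x.1}).toReal /
          (H {y : ℝ × ℝ | n.1 * y.1 + n.2 * y.2 < δ}).toReal) ^ (lam - 1)) :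
    Filter.Tendsto
      (fun δ : ℝ => ∫ x : ℝ × ℝ, (n.1 * x.1 + n.2 * x.2) * hstar δ x)
      Filter.atTop
      (nhds ((lam : ℝ) *
        ∫ x : ℝ × ℝ,
          (n.1 * x.1 + n.2 * x.2) *
            (H {y : ℝ × ℝ | y.1 < x.1}).toReal ^ (lam - 1) * h x)) := by
  set φ : ℝ × ℝ → ℝ := fun y => n.1 * y.1 + n.2 * y.2 with hφ
  have hφc : Continuous φ := by
    exact ((continuous_const.mul continuous_fst).add (continuous_const.mul continuous_snd))
  set L : ℝ → Set (ℝ × ℝ) := fun δ => {y : ℝ × ℝ | φ y < δ} with hL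
  have hLmeas : ∀ δ, MeasurableSet (L δ) := fun δ => hφc.measurable measurableSet_Iio
  have hLmono : Monotone L := fun a b hab y hy => lt_of_lt_of_le hy hab
  have hLunion : (⋃ δ : ℝ, L δ) = Set.univ := by
    ext y
    simp only [Set.mem_iUnion, Set.mem_univ, iff_true]
    exact ⟨φ y + 1, by simp [L]⟩
  -- D δ := H(L δ).toReal tends to 1
  have hD : Tendsto (fun δ : ℝ => (H (L δ)).toReal) atTop (𝓝 1) := by
    have h1 : Tendsto (fun δ : ℝ => H (L δ)) atTop (𝓝 (H (⋃ δ : ℝ, L δ))) :=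
      tendsto_measure_iUnion_atTop hLmono
    rw [hLunion, measure_univ] at h1
    have := (ENNReal.tendsto_toReal (by simp : (1 : ENNReal) ≠ ⊤)).comp h1
    exact this
  -- pointwise limit of the numerator measures
  have hN : ∀ x : ℝ × ℝ,
      Tendsto (fun δ : ℝ => (H (L δ ∩ {y : ℝ × ℝ | y.1 < x.1})).toReal) atTop
        (𝓝 ((H {y : ℝ × ℝ | y.1 < x.1}).toReal)) := by
    intro x
    have hmono : Monotone (fun δ : ℝ => L δ ∩ {y : ℝ × ℝ | y.1 < x.1}) :=
      fun a b hab => Set.inter_subset_inter_left _ (hLmono hab)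
    have hU : (⋃ δ : ℝ, L δ ∩ {y : ℝ × ℝ | y.1 < x.1}) = {y : ℝ × ℝ | y.1 < x.1} := by
      rw [← Set.iUnion_inter, hLunion, Set.univ_inter]
    have h1 : Tendsto (fun δ : ℝ => H (L δ ∩ {y : ℝ × ℝ | y.1 < x.1})) atTop
        (𝓝 (H {y : ℝ × ℝ | y.1 < x.1})) := by
      have := tendsto_measure_iUnion_atTop (μ := H) hmono
      rwa [hU] at this
    exact (ENNReal.tendsto_toReal (measure_ne_top H _)).comp h1
  -- rewrite the set in the statement as an intersection
  have hsetEq : ∀ δ : ℝ, ∀ x : ℝ × ℝ,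
      {y : ℝ × ℝ | n.1 * y.1 + n.2 * y.2 < δ ∧ y.1 < x.1} = L δ ∩ {y : ℝ × ℝ | y.1 < x.1} :=
    fun δ x => rfl
  set M : ℝ × ℝ → ℝ := fun x => (H {y : ℝ × ℝ | y.1 < x.1}).toReal with hM
  -- the integrands
  set F : ℝ → ℝ × ℝ → ℝ := fun δ x => φ x * hstar δ x with hF
  have hFeq : ∀ δ x, F δ x =
      φ x * ((lam : ℝ) * (Set.indicator (L δ) h x / (H (L δ)).toReal) *
        ((H (L δ ∩ {y : ℝ × ℝ | y.1 < x.1})).toReal / (H (L δ)).toReal) ^ (lam - 1)) := by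
    intro δ x
    rw [hF]
    simp only
    rw [hhstar δ x]
    rfl
  -- measurability
  have hmeas : ∀ δ : ℝ, AEStronglyMeasurable (F δ) volume := by
    intro δ
    have : Measurable (F δ) := by
      have hm1 : Measurable fun x : ℝ × ℝ => Set.indicator (L δ) h x :=
        hh.measurable.indicator (hLmeas δ)
      have hm2 : Measurable fun x : ℝ × ℝ =>
          (H (L δ ∩ {y : ℝ × ℝ | y.1 < x.1})).toReal := slice_measurable H (L δ)
      have : Measurable fun x : ℝ × ℝ =>
          φ x * ((lam : ℝ) * (Set.indicator (L δ) h x / (H (L δ)).toReal) *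
            ((H (L δ ∩ {y : ℝ × ℝ | y.1 < x.1})).toReal / (H (L δ)).toReal) ^ (lam - 1)) :=
        hφc.measurable.mul ((measurable_const.mul (hm1.div measurable_const)).mul
          ((hm2.div measurable_const).pow measurable_const))
      have heqF : F δ = fun x : ℝ × ℝ =>
          φ x * ((lam : ℝ) * (Set.indicator (L δ) h x / (H (L δ)).toReal) *
            ((H (L δ ∩ {y : ℝ × ℝ | y.1 < x.1})).toReal / (H (L δ)).toReal) ^ (lam - 1)) :=
        funext (hFeq δ)
      rw [heqF]
      exact this
    exact this.aestronglyMeasurable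
  -- the dominating function
  set bound : ℝ × ℝ → ℝ := fun x => (2 * lam : ℝ) * (|φ x| * h x) with hbound
  have hbound_int : Integrable bound := hmom.const_mul _
  -- eventual bound
  have hev : ∀ᶠ δ : ℝ in atTop, (1 : ℝ) / 2 < (H (L δ)).toReal :=
    hD.eventually (eventually_gt_nhds (show (1:ℝ)/2 < 1 by norm_num))
  have h_bound : ∀ᶠ δ : ℝ in atTop, ∀ᵐ x : ℝ × ℝ, ‖F δ x‖ ≤ bound x := by
    filter_upwards [hev] with δ hδ
    refine Filter.Eventually.of_forall (fun x => ?_)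
    have hDpos : (0 : ℝ) < (H (L δ)).toReal := by linarith
    have hind0 : 0 ≤ Set.indicator (L δ) h x :=
      Set.indicator_nonneg (fun y _ => (hpos y).le) x
    have hind1 : Set.indicator (L δ) h x ≤ h x :=
      Set.indicator_le_self' (fun y _ => (hpos y).le) x
    have hNle : (H (L δ ∩ {y : ℝ × ℝ | y.1 < x.1})).toReal ≤ (H (L δ)).toReal :=
      ENNReal.toReal_mono (measure_ne_top H _) (measure_mono Set.inter_subset_left)
    have hr0 : 0 ≤ (H (L δ ∩ {y : ℝ × ℝ | y.1 < x.1})).toReal / (H (L δ)).toReal :=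
      div_nonneg ENNReal.toReal_nonneg ENNReal.toReal_nonneg
    have hr1 : (H (L δ ∩ {y : ℝ × ℝ | y.1 < x.1})).toReal / (H (L δ)).toReal ≤ 1 :=
      div_le_one_of_le₀ hNle ENNReal.toReal_nonneg
    have hpow : ((H (L δ ∩ {y : ℝ × ℝ | y.1 < x.1})).toReal / (H (L δ)).toReal) ^ (lam - 1)
        ≤ 1 := pow_le_one₀ hr0 hr1
    have hpow0 : 0 ≤ ((H (L δ ∩ {y : ℝ × ℝ | y.1 < x.1})).toReal / (H (L δ)).toReal)
        ^ (lam - 1) := pow_nonneg hr0 _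
    have hdiv : Set.indicator (L δ) h x / (H (L δ)).toReal ≤ 2 * h x := by
      rw [div_le_iff₀ hDpos]
      nlinarith [(hpos x).le]
    have hdiv0 : 0 ≤ Set.indicator (L δ) h x / (H (L δ)).toReal :=
      div_nonneg hind0 hDpos.le
    have hstar_nonneg : 0 ≤ hstar δ x := by
      rw [hhstar δ x]
      exact mul_nonneg (mul_nonneg (by positivity) hdiv0) hpow0
    have hstar_le : hstar δ x ≤ 2 * lam * h x := by
      rw [hhstar δ x]
      calc (lam : ℝ) * (Set.indicator (L δ) h x / (H (L δ)).toReal) *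
            ((H (L δ ∩ {y : ℝ × ℝ | y.1 < x.1})).toReal / (H (L δ)).toReal) ^ (lam - 1)
          ≤ (lam : ℝ) * (2 * h x) * 1 := by
            apply mul_le_mul _ hpow hpow0 (mul_nonneg (Nat.cast_nonneg lam) (by linarith [(hpos x).le]))
            exact mul_le_mul_of_nonneg_left hdiv (by positivity)
        _ = 2 * lam * h x := by ring
    have : ‖F δ x‖ = |φ x| * hstar δ x := by
      rw [hF]; simp only [norm_mul, Real.norm_eq_abs, abs_of_nonneg hstar_nonneg]
    rw [this, hbound]
    calc |φ x| * hstar δ x ≤ |φ x| * (2 * lam * h x) :=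
          mul_le_mul_of_nonneg_left hstar_le (abs_nonneg _)
      _ = 2 * lam * (|φ x| * h x) := by ring
  -- pointwise convergence
  have h_lim : ∀ᵐ x : ℝ × ℝ, Tendsto (fun δ : ℝ => F δ x) atTop
      (𝓝 (φ x * ((lam : ℝ) * h x * M x ^ (lam - 1)))) := by
    refine Filter.Eventually.of_forall (fun x => ?_)
    have hev2 : ∀ᶠ δ : ℝ in atTop, Set.indicator (L δ) h x = h x := by
      filter_upwards [eventually_gt_atTop (φ x)] with δ hδ
      exact Set.indicator_of_mem (show x ∈ L δ from hδ) h
    have htend : Tendsto (fun δ : ℝ =>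
        φ x * ((lam : ℝ) * (h x / (H (L δ)).toReal) *
          ((H (L δ ∩ {y : ℝ × ℝ | y.1 < x.1})).toReal / (H (L δ)).toReal) ^ (lam - 1)))
        atTop (𝓝 (φ x * ((lam : ℝ) * (h x / 1) * (M x / 1) ^ (lam - 1)))) := by
      apply Tendsto.const_mul
      exact ((tendsto_const_nhds.div hD one_ne_zero).const_mul _).mul
        (((hN x).div hD one_ne_zero).pow _)
    have heq : (fun δ : ℝ => F δ x) =ᶠ[atTop] (fun δ : ℝ =>
        φ x * ((lam : ℝ) * (h x / (H (L δ)).toReal) *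
          ((H (L δ ∩ {y : ℝ × ℝ | y.1 < x.1})).toReal / (H (L δ)).toReal) ^ (lam - 1))) := by
      filter_upwards [hev2] with δ hδ
      rw [hFeq δ x, hδ]
    refine (Tendsto.congr' heq.symm ?_)
    simpa [div_one] using htend
  have key := tendsto_integral_filter_of_dominated_convergence bound
    (Filter.Eventually.of_forall hmeas) h_bound hbound_int h_lim
  have hgoal : (lam : ℝ) * ∫ x : ℝ × ℝ, (n.1 * x.1 + n.2 * x.2) *
      (H {y : ℝ × ℝ | y.1 < x.1}).toReal ^ (lam - 1) * h x
      = ∫ x : ℝ × ℝ, φ x * ((lam : ℝ) * h x * M x ^ (lam - 1)) := by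
    rw [← integral_const_mul]
    congr 1
    funext x
    ring
  rw [show (fun δ : ℝ => ∫ x : ℝ × ℝ, (n.1 * x.1 + n.2 * x.2) * hstar δ x)
      = fun δ : ℝ => ∫ x : ℝ × ℝ, F δ x from rfl, hgoal]
  exact key
end

section
/- Let ψ : [0,+∞] → [0,1] be an Archimedean generator (ψ(0) = 1, lim_{t→+∞} ψ(t) = 0, ψ continuous and strictly decreasing on [0, inf{t : ψ(t) = 0})), and suppose ψ is 2-monotone, i.e. ψ is convex and decreasing on (0,∞). Define ψ^{−1}(u) = inf{ t : ψ(t) = u } for u ∈ [0,1] and C_ψ(u₁,u₂) = ψ(ψ^{−1}(u₁) + ψ^{−1}(u₂)). Then C_ψ is a two-dimensional copula: it is grounded, has uniform margins, and is 2-increasing. -/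
open Set

/-- A two-dimensional copula: grounded, uniform margins, and 2-increasing on `[0,1]²`. -/
def IsCopula2 (C : ℝ → ℝ → ℝ) : Prop :=
  (∀ u ∈ Set.Icc (0 : ℝ) 1, C u 0 = 0 ∧ C 0 u = 0 ∧ C u 1 = u ∧ C 1 u = u) ∧
  (∀ a₁ b₁ a₂ b₂ : ℝ, a₁ ∈ Set.Icc (0 : ℝ) 1 → b₁ ∈ Set.Icc (0 : ℝ) 1 →
    a₂ ∈ Set.Icc (0 : ℝ) 1 → b₂ ∈ Set.Icc (0 : ℝ) 1 → a₁ ≤ b₁ → a₂ ≤ b₂ →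
    0 ≤ C b₁ b₂ - C a₁ b₂ - C b₁ a₂ + C a₁ a₂)

open Filter Topology in
/-- Four-point convexity inequality for a convex function on a set. -/
lemma four_point_convex {φ : ℝ → ℝ} {s : Set ℝ}
    (hconv : ConvexOn ℝ s φ) {a b c d : ℝ} (ha : a ∈ s) (hd : d ∈ s)
    (hab : a ≤ b) (hac : a ≤ c) (hbcd : d = b + c - a) :
    φ b + φ c ≤ φ a + φ d := by
  rcases eq_or_lt_of_le (show a ≤ d by linarith) with h | h
  · have hb : b = a := by linarith
    have hc : c = a := by linarith
    rw [hb, hc, ← h]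
  · subst hbcd
    have hda : 0 < b + c - a - a := by linarith
    set D : ℝ := b + c - a with hD
    set l : ℝ := (D - b) / (D - a) with hl
    have hda' : 0 < D - a := by rw [hD]; linarith
    have hbd : b ≤ D := by rw [hD]; linarith
    have hcd : c ≤ D := by rw [hD]; linarith
    have hl0 : 0 ≤ l := div_nonneg (by linarith) hda'.le
    have hl1 : l ≤ 1 := by rw [hl, div_le_one hda']; linarith
    have h1 : φ b ≤ l * φ a + (1 - l) * φ D := by
      have heq : l • a + (1 - l) • D = b := by
        simp only [smul_eq_mul, hl]
        field_simp
        ring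
      have := hconv.2 ha hd hl0 (show (0:ℝ) ≤ 1 - l by linarith)
        (show l + (1 - l) = 1 by ring)
      rw [heq] at this
      simpa using this
    have h2 : φ c ≤ (1 - l) * φ a + l * φ D := by
      have heq : (1 - l) • a + l • D = c := by
        simp only [smul_eq_mul, hl, hD]
        have hne : b + c - a - a ≠ 0 := by linarith
        field_simp
        ring
      have := hconv.2 ha hd (show (0:ℝ) ≤ 1 - l by linarith) hl0
        (show (1 - l) + l = 1 by ring)
      rw [heq] at this
      simpa using this
    linarith

open Filter Topology in
/-- Extension of the four-point inequality to the closed half-line, by continuity. -/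
lemma four_point_Ici {φ : ℝ → ℝ} (hc : Continuous φ)
    (hconv : ConvexOn ℝ (Ioi (0:ℝ)) φ) {a b c : ℝ}
    (ha : 0 ≤ a) (hab : a ≤ b) (hac : a ≤ c) :
    φ b + φ c ≤ φ a + φ (b + c - a) := by
  rcases ha.lt_or_eq with h | h
  · exact four_point_convex hconv h (by simp only [mem_Ioi]; linarith) hab hac rfl
  · subst h
    simp only [sub_zero]
    rcases hab.lt_or_eq with hb | hb
    · rcases hac.lt_or_eq with hcc | hcc
      · -- 0 < b, 0 < c : limit argument
        have key : ∀ ε ∈ Ioo (0:ℝ) (min b c), φ b + φ c ≤ φ ε + φ (b + c - ε) := by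
          intro ε hε
          have hεb : ε ≤ b := le_of_lt (lt_of_lt_of_le hε.2 (min_le_left _ _))
          have hεc : ε ≤ c := le_of_lt (lt_of_lt_of_le hε.2 (min_le_right _ _))
          have := four_point_convex hconv (show ε ∈ Ioi (0:ℝ) from hε.1)
            (show b + c - ε ∈ Ioi (0:ℝ) by simp only [mem_Ioi]; linarith) hεb hεc rfl
          linarith
        have tlim : Tendsto (fun ε : ℝ => φ ε + φ (b + c - ε)) (𝓝[>] (0:ℝ))
            (𝓝 (φ 0 + φ (b + c))) := by
          have hcont2 : Continuous fun ε : ℝ => φ ε + φ (b + c - ε) :=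
            hc.add (hc.comp (continuous_const.sub continuous_id))
          have := hcont2.tendsto 0
          simp only [sub_zero] at this
          exact this.mono_left nhdsWithin_le_nhds
        refine ge_of_tendsto tlim ?_
        exact eventually_of_mem
          (Ioo_mem_nhdsGT_of_mem ⟨le_refl 0, lt_min hb hcc⟩) key
      · rw [← hcc]; simp [add_comm]
    · rw [← hb]; simp

/-- If `ψ : [0,∞] → [0,1]` is an Archimedean generator
(`ψ(0) = 1`, `ψ(∞) = 0`, continuous, strictly decreasing while positive) which is
2-monotone (decreasing and convex on `(0,∞)`), then
`C_ψ(u₁,u₂) = ψ(ψ⁻¹(u₁) + ψ⁻¹(u₂))`, with `ψ⁻¹(u) = inf{t : ψ(t) = u}`, is a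
two-dimensional copula. -/
theorem archimedean_generator_two_monotone_gives_copula
    (ψ : ENNReal → ℝ)
    (hψ0 : ψ 0 = 1)
    (hψtop : ψ ⊤ = 0)
    (hrange : ∀ t, ψ t ∈ Icc (0 : ℝ) 1)
    (hcont : Continuous ψ)
    (hanti : Antitone ψ)
    -- strictly decreasing on [0, inf{t : ψ(t) = 0})
    (hstrict : ∀ s t : ENNReal, s < t → 0 < ψ s → ψ t < ψ s)
    -- 2-monotonicity: ψ is convex (and decreasing) on (0,∞)
    (hconv : ConvexOn ℝ (Ioi (0 : ℝ)) (fun t : ℝ => ψ (ENNReal.ofReal t)))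
    (C : ℝ → ℝ → ℝ)
    (hC : ∀ u₁ u₂ : ℝ, C u₁ u₂ =
      ψ (sInf {t : ENNReal | ψ t = u₁} + sInf {t : ENNReal | ψ t = u₂})) :
    IsCopula2 C := by
  set inv : ℝ → ENNReal := fun u => sInf {t : ENNReal | ψ t = u} with hinv
  -- ψ is a right inverse of inv on [0,1]
  have hmem : ∀ u ∈ Icc (0:ℝ) 1, ψ (inv u) = u := by
    intro u hu
    have hne : {t : ENNReal | ψ t = u}.Nonempty := by
      have hsub := intermediate_value_Icc' (le_top : (0:ENNReal) ≤ ⊤) hcont.continuousOn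
      have hu' : u ∈ Icc (ψ ⊤) (ψ 0) := by rw [hψ0, hψtop]; exact hu
      obtain ⟨t, _, ht⟩ := hsub hu'
      exact ⟨t, ht⟩
    have hcl : IsClosed {t : ENNReal | ψ t = u} := isClosed_eq hcont continuous_const
    exact IsClosed.sInf_mem hne hcl
  have hinv1 : inv 1 = 0 :=
    le_antisymm (sInf_le (by simpa using hψ0)) zero_le
  have hψinv0 : ψ (inv 0) = 0 := hmem 0 ⟨le_refl 0, zero_le_one⟩
  -- inv is antitone on [0,1]
  have hanti_inv : ∀ a b : ℝ, a ∈ Icc (0:ℝ) 1 → b ∈ Icc (0:ℝ) 1 → a ≤ b →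
      inv b ≤ inv a := by
    intro a b ha hb hab
    rcases lt_or_ge (inv a) (inv b) with h | h
    · have h1 : b ≤ a := by
        rw [← hmem a ha, ← hmem b hb]; exact hanti h.le
      have h2 : a = b := le_antisymm hab h1
      rw [h2] at h
      exact absurd h (lt_irrefl _)
    · exact h
  constructor
  · intro u hu
    refine ⟨?_, ?_, ?_, ?_⟩
    · rw [hC]
      refine le_antisymm ?_ (hrange _).1
      calc ψ (inv u + inv 0) ≤ ψ (inv 0) := hanti le_add_self
        _ = 0 := hψinv0
    · rw [hC]
      refine le_antisymm ?_ (hrange _).1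
      calc ψ (inv 0 + inv u) ≤ ψ (inv 0) := hanti le_self_add
        _ = 0 := hψinv0
    · rw [hC]
      show ψ (inv u + inv 1) = u
      rw [hinv1, add_zero, hmem u hu]
    · rw [hC]
      show ψ (inv 1 + inv u) = u
      rw [hinv1, zero_add, hmem u hu]
  · intro a₁ b₁ a₂ b₂ ha₁ hb₁ ha₂ hb₂ h₁ h₂
    rw [hC, hC, hC, hC]
    show 0 ≤ ψ (inv b₁ + inv b₂) - ψ (inv a₁ + inv b₂) -
      ψ (inv b₁ + inv a₂) + ψ (inv a₁ + inv a₂)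
    set s := inv a₁
    set t := inv b₁
    set u := inv a₂
    set v := inv b₂
    have hts : t ≤ s := hanti_inv a₁ b₁ ha₁ hb₁ h₁
    have hvu : v ≤ u := hanti_inv a₂ b₂ ha₂ hb₂ h₂
    by_cases hs : s = ⊤
    · rw [hs, top_add, top_add, hψtop]
      have : ψ (t + u) ≤ ψ (t + v) := hanti (add_le_add_right hvu t)
      linarith
    by_cases hu' : u = ⊤
    · rw [hu', add_top, add_top, hψtop]
      have : ψ (s + v) ≤ ψ (t + v) := hanti (add_le_add_left hts v)
      linarith
    have ht : t ≠ ⊤ := fun h => hs (top_le_iff.mp (h ▸ hts))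
    have hv : v ≠ ⊤ := fun h => hu' (top_le_iff.mp (h ▸ hvu))
    -- finite case: use convexity on ℝ
    set φ : ℝ → ℝ := fun r => ψ (ENNReal.ofReal r) with hφ
    have hφcont : Continuous φ := hcont.comp ENNReal.continuous_ofReal
    have hrw : ∀ x : ENNReal, x ≠ ⊤ → ψ x = φ x.toReal := by
      intro x hx
      rw [hφ]
      simp [ENNReal.ofReal_toReal hx]
    have htv : t + v ≠ ⊤ := ENNReal.add_ne_top.mpr ⟨ht, hv⟩
    have hsv : s + v ≠ ⊤ := ENNReal.add_ne_top.mpr ⟨hs, hv⟩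
    have htu : t + u ≠ ⊤ := ENNReal.add_ne_top.mpr ⟨ht, hu'⟩
    have hsu : s + u ≠ ⊤ := ENNReal.add_ne_top.mpr ⟨hs, hu'⟩
    have e1 := hrw _ htv
    have e2 := hrw _ hsv
    have e3 := hrw _ htu
    have e4 := hrw _ hsu
    have key := four_point_Ici hφcont hconv
      (ENNReal.toReal_nonneg : 0 ≤ (t + v).toReal)
      (ENNReal.toReal_mono hsv (add_le_add_left hts v))
      (ENNReal.toReal_mono htu (add_le_add_right hvu t))
    have hsum : (s + v).toReal + (t + u).toReal - (t + v).toReal = (s + u).toReal := by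
      rw [ENNReal.toReal_add hs hv, ENNReal.toReal_add ht hu',
        ENNReal.toReal_add ht hv, ENNReal.toReal_add hs hu']
      ring
    rw [hsum] at key
    rw [e1, e2, e3, e4]
    linarith
end
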